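/- arXiv:1709.08959 — 10 statements merged into one kernel-verified Lean document; each statement's English description precedes it below -/
import Mathlib

section
/- Let Φ : B(S^{n-1})₊ → L¹(μ) satisfy Φ(f·χ_A) = Φ(f)·χ_A for every bounded nonnegative Borel function f on S^{n-1} and every Borel set A. Then for any finite sequences (f_i)_{i=1}^m, (g_i)_{i=1}^m in B(S^{n-1})₊ there exist f, g ∈ B(S^{n-1})₊ such that: (i) |f(t)| ≤ max_i |f_i(t)| for all t; (ii) |g(t)| ≤ max_i |g_i(t)| for all t; (iii) |f(t) − g(t)| ≤ max_i |f_i(t) − g_i(t)| for all t; (iv) Φ(f) − Φ(g) = max_{1≤i≤m} (Φ(f_i) − Φ(g_i)) in L¹(μ). -/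
open MeasureTheory Filter Topology

/-- The cone `B(S^{n-1})₊` of bounded nonnegative Borel functions on the sphere. -/
def BddBorelNN {n : ℕ} (f : Metric.sphere (0 : EuclideanSpace ℝ (Fin n)) 1 → ℝ) : Prop :=
  Measurable f ∧ (∃ C : ℝ, ∀ t, f t ≤ C) ∧ ∀ t, 0 ≤ f t

/-- Lemma "ortogonalidad" (1): for `Φ : B(S^{n-1})₊ → L¹(μ)` with `Φ(f χ_A) = Φ(f) χ_A`,
and finite sequences `(fᵢ), (gᵢ)`, there are `f, g` in the cone dominated as in (i)–(iii)
with `Φ(f) − Φ(g) = max_i (Φ(fᵢ) − Φ(gᵢ))` almost everywhere. -/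
theorem stmt3 {n : ℕ} (μ : Measure (Metric.sphere (0 : EuclideanSpace ℝ (Fin n)) 1))
    [IsFiniteMeasure μ]
    (Φ : (Metric.sphere (0 : EuclideanSpace ℝ (Fin n)) 1 → ℝ) →
      (Metric.sphere (0 : EuclideanSpace ℝ (Fin n)) 1 → ℝ))
    (hΦL1 : ∀ f, BddBorelNN f → Integrable (Φ f) μ)
    (hΦind : ∀ f, BddBorelNN f → ∀ A, MeasurableSet A →
      Φ (Set.indicator A f) =ᵐ[μ] Set.indicator A (Φ f))
    (m : ℕ) (f g : Fin (m + 1) → Metric.sphere (0 : EuclideanSpace ℝ (Fin n)) 1 → ℝ)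
    (hf : ∀ i, BddBorelNN (f i)) (hg : ∀ i, BddBorelNN (g i)) :
    ∃ f₀ g₀, BddBorelNN f₀ ∧ BddBorelNN g₀ ∧
      (∀ t, |f₀ t| ≤ ⨆ i, |f i t|) ∧
      (∀ t, |g₀ t| ≤ ⨆ i, |g i t|) ∧
      (∀ t, |f₀ t - g₀ t| ≤ ⨆ i, |f i t - g i t|) ∧
      (fun t => Φ f₀ t - Φ g₀ t) =ᵐ[μ] (fun t => ⨆ i, (Φ (f i) t - Φ (g i) t)) := by
  classical
  let S := Metric.sphere (0 : EuclideanSpace ℝ (Fin n)) 1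
  -- measurable representatives of Φ(f i), Φ(g i)
  have hFm : ∀ i, AEStronglyMeasurable (Φ (f i)) μ :=
    fun i => (hΦL1 (f i) (hf i)).aestronglyMeasurable
  have hGm : ∀ i, AEStronglyMeasurable (Φ (g i)) μ :=
    fun i => (hΦL1 (g i) (hg i)).aestronglyMeasurable
  set F : Fin (m + 1) → S → ℝ := fun i => (hFm i).mk _ with hF_def
  set G : Fin (m + 1) → S → ℝ := fun i => (hGm i).mk _ with hG_def
  have hFae : ∀ i, Φ (f i) =ᵐ[μ] F i := fun i => (hFm i).ae_eq_mk
  have hGae : ∀ i, Φ (g i) =ᵐ[μ] G i := fun i => (hGm i).ae_eq_mk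
  have hFmeas : ∀ i, Measurable (F i) := fun i => (hFm i).stronglyMeasurable_mk.measurable
  have hGmeas : ∀ i, Measurable (G i) := fun i => (hGm i).stronglyMeasurable_mk.measurable
  set d : Fin (m + 1) → S → ℝ := fun i t => F i t - G i t with hd_def
  have hdmeas : ∀ i, Measurable (d i) := fun i => (hFmeas i).sub (hGmeas i)
  set D : S → ℝ := fun t => ⨆ i, d i t with hD_def
  have hDmeas : Measurable D := by
    have h2 : D = Finset.univ.sup' Finset.univ_nonempty d := by
      funext t
      rw [Finset.sup'_apply, Finset.sup'_univ_eq_ciSup]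
    rw [h2]
    exact Finset.measurable_sup' Finset.univ_nonempty (fun i _ => hdmeas i)
  -- the partition
  set B : Fin (m + 1) → Set S := fun i => {t | d i t = D t} with hB_def
  have hBmeas : ∀ i, MeasurableSet (B i) := fun i =>
    measurableSet_eq_fun (hdmeas i) hDmeas
  set A : Fin (m + 1) → Set S := fun i => B i ∩ ⋂ j, ⋂ _ : j < i, (B j)ᶜ with hA_def
  have hAmeas : ∀ i, MeasurableSet (A i) :=
    fun i => (hBmeas i).inter (MeasurableSet.iInter fun j =>
      MeasurableSet.iInter fun _ => (hBmeas j).compl)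
  have hAB : ∀ i t, t ∈ A i → d i t = D t := fun i t ht => ht.1
  have hmem : ∀ t, ∃ i, t ∈ A i := by
    intro t
    have hex : ∃ i, d i t = D t := exists_eq_ciSup_of_finite
    set s : Finset (Fin (m + 1)) := Finset.univ.filter (fun i => d i t = D t) with hs_def
    have hsne : s.Nonempty :=
      ⟨hex.choose, Finset.mem_filter.mpr ⟨Finset.mem_univ _, hex.choose_spec⟩⟩
    refine ⟨s.min' hsne, ?_, ?_⟩
    · exact (Finset.mem_filter.mp (s.min'_mem hsne)).2
    · refine Set.mem_iInter.mpr fun j => Set.mem_iInter.mpr fun hj hjB => ?_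
      have : s.min' hsne ≤ j := s.min'_le j (Finset.mem_filter.mpr ⟨Finset.mem_univ _, hjB⟩)
      exact absurd hj (not_lt.mpr this)
  have hdisj : ∀ t i j, t ∈ A i → t ∈ A j → i = j := by
    intro t i j hi hj
    by_contra hij
    rcases lt_or_gt_of_ne hij with h | h
    · exact (Set.mem_iInter.mp (Set.mem_iInter.mp hj.2 i) h) hi.1
    · exact (Set.mem_iInter.mp (Set.mem_iInter.mp hi.2 j) h) hj.1
  -- the functions f₀, g₀
  set f₀ : S → ℝ := fun t => ∑ i, Set.indicator (A i) (f i) t with hf₀_def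
  set g₀ : S → ℝ := fun t => ∑ i, Set.indicator (A i) (g i) t with hg₀_def
  have hcollapse : ∀ (h : Fin (m + 1) → S → ℝ) t i, t ∈ A i →
      (∑ j, Set.indicator (A j) (h j) t) = h i t := by
    intro h t i hti
    rw [Finset.sum_eq_single i]
    · exact Set.indicator_of_mem hti _
    · intro j _ hji
      exact Set.indicator_of_notMem (fun htj => hji (hdisj t j i htj hti)) _
    · exact fun hi => absurd (Finset.mem_univ i) hi
  have hf₀c : ∀ t i, t ∈ A i → f₀ t = f i t := fun t i h => hcollapse f t i h
  have hg₀c : ∀ t i, t ∈ A i → g₀ t = g i t := fun t i h => hcollapse g t i h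
  -- f₀, g₀ are in the cone
  have hBdd : ∀ (h : Fin (m + 1) → S → ℝ), (∀ i, BddBorelNN (h i)) →
      BddBorelNN (fun t => ∑ i, Set.indicator (A i) (h i) t) := by
    intro h hh
    refine ⟨?_, ?_, ?_⟩
    · exact Finset.measurable_sum _ fun i _ => ((hh i).1).indicator (hAmeas i)
    · choose C hC using fun i => (hh i).2.1
      refine ⟨Finset.univ.sup' Finset.univ_nonempty C, fun t => ?_⟩
      obtain ⟨i, hi⟩ := hmem t
      show (∑ j, Set.indicator (A j) (h j) t) ≤ _
      rw [hcollapse h t i hi]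
      exact le_trans (hC i t) (Finset.le_sup' C (Finset.mem_univ i))
    · intro t
      exact Finset.sum_nonneg fun i _ => Set.indicator_nonneg (fun x _ => (hh i).2.2 x) t
  have hf₀B : BddBorelNN f₀ := hBdd f hf
  have hg₀B : BddBorelNN g₀ := hBdd g hg
  refine ⟨f₀, g₀, hf₀B, hg₀B, ?_, ?_, ?_, ?_⟩
  · intro t
    obtain ⟨i, hi⟩ := hmem t
    rw [hf₀c t i hi]
    exact le_ciSup (f := fun j => |f j t|) (Set.Finite.bddAbove (Set.finite_range _)) i
  · intro t
    obtain ⟨i, hi⟩ := hmem t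
    rw [hg₀c t i hi]
    exact le_ciSup (f := fun j => |g j t|) (Set.Finite.bddAbove (Set.finite_range _)) i
  · intro t
    obtain ⟨i, hi⟩ := hmem t
    rw [hf₀c t i hi, hg₀c t i hi]
    exact le_ciSup (f := fun j => |f j t - g j t|) (Set.Finite.bddAbove (Set.finite_range _)) i
  · -- key a.e. identity on each A i
    have key : ∀ i, ∀ᵐ t ∂μ, t ∈ A i → Φ f₀ t = Φ (f i) t := by
      intro i
      have h1 : Φ (Set.indicator (A i) f₀) =ᵐ[μ] Set.indicator (A i) (Φ f₀) :=
        hΦind f₀ hf₀B (A i) (hAmeas i)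
      have h2 : Φ (Set.indicator (A i) (f i)) =ᵐ[μ] Set.indicator (A i) (Φ (f i)) :=
        hΦind (f i) (hf i) (A i) (hAmeas i)
      have heq : Set.indicator (A i) f₀ = Set.indicator (A i) (f i) := by
        funext t
        by_cases ht : t ∈ A i
        · rw [Set.indicator_of_mem ht, Set.indicator_of_mem ht, hf₀c t i ht]
        · rw [Set.indicator_of_notMem ht, Set.indicator_of_notMem ht]
      rw [heq] at h1
      filter_upwards [h1, h2] with t h1t h2t ht
      have := h1t.symm.trans h2t
      rwa [Set.indicator_of_mem ht, Set.indicator_of_mem ht] at this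
    have keyg : ∀ i, ∀ᵐ t ∂μ, t ∈ A i → Φ g₀ t = Φ (g i) t := by
      intro i
      have h1 : Φ (Set.indicator (A i) g₀) =ᵐ[μ] Set.indicator (A i) (Φ g₀) :=
        hΦind g₀ hg₀B (A i) (hAmeas i)
      have h2 : Φ (Set.indicator (A i) (g i)) =ᵐ[μ] Set.indicator (A i) (Φ (g i)) :=
        hΦind (g i) (hg i) (A i) (hAmeas i)
      have heq : Set.indicator (A i) g₀ = Set.indicator (A i) (g i) := by
        funext t
        by_cases ht : t ∈ A i
        · rw [Set.indicator_of_mem ht, Set.indicator_of_mem ht, hg₀c t i ht]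
        · rw [Set.indicator_of_notMem ht, Set.indicator_of_notMem ht]
      rw [heq] at h1
      filter_upwards [h1, h2] with t h1t h2t ht
      have := h1t.symm.trans h2t
      rwa [Set.indicator_of_mem ht, Set.indicator_of_mem ht] at this
    have hall : ∀ᵐ t ∂μ, (∀ i, t ∈ A i → Φ f₀ t = Φ (f i) t) ∧
        (∀ i, t ∈ A i → Φ g₀ t = Φ (g i) t) ∧
        (∀ i, Φ (f i) t = F i t) ∧ (∀ i, Φ (g i) t = G i t) := by
      refine ((ae_all_iff.mpr key).and ((ae_all_iff.mpr keyg).and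
        ((ae_all_iff.mpr hFae).and (ae_all_iff.mpr hGae)))).mono ?_
      tauto
    filter_upwards [hall] with t ⟨h1, h2, h3, h4⟩
    obtain ⟨i, hi⟩ := hmem t
    have hsup : (⨆ j, (Φ (f j) t - Φ (g j) t)) = D t := by
      have : (fun j => Φ (f j) t - Φ (g j) t) = fun j => d j t := by
        funext j; rw [h3 j, h4 j]
      rw [hD_def, this]
    rw [h1 i hi, h2 i hi, h3 i, h4 i, hsup, ← hAB i t hi]
end

section
/- Let Φ : B(S^{n-1})₊ → L¹(μ) satisfy Φ(f·χ_A) = Φ(f)·χ_A for every f ∈ B(S^{n-1})₊ and Borel set A. Let (f_i)_{i=1}^m, (g_i)_{i=1}^m be finite sequences in B(S^{n-1})₊ and let f = max_{1≤i≤m} f_i (pointwise). Then there exists g ∈ B(S^{n-1})₊ such that: (i) |g(t)| ≤ max_i |g_i(t)| for all t; (ii) |f(t) − g(t)| ≤ max_i |f_i(t) − g_i(t)| for all t; (iii) Φ(f)(t) − Φ(g)(t) ≥ min_{1≤i≤m} (Φ(f_i)(t) − Φ(g_i)(t)) for μ-almost every t. -/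
open MeasureTheory Filter Topology

/-- Lemma "ortogonalidad" (2): with `Φ` as before and `f = max_i fᵢ` pointwise, there is
`g` in the cone with `|g| ≤ max_i |gᵢ|`, `|f − g| ≤ max_i |fᵢ − gᵢ|` pointwise, and
`Φ(f) − Φ(g) ≥ min_i (Φ(fᵢ) − Φ(gᵢ))` almost everywhere. -/
theorem stmt4 {n : ℕ} (μ : Measure (Metric.sphere (0 : EuclideanSpace ℝ (Fin n)) 1))
    [IsFiniteMeasure μ]
    (Φ : (Metric.sphere (0 : EuclideanSpace ℝ (Fin n)) 1 → ℝ) →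
      (Metric.sphere (0 : EuclideanSpace ℝ (Fin n)) 1 → ℝ))
    (hΦL1 : ∀ f, BddBorelNN f → Integrable (Φ f) μ)
    (hΦind : ∀ f, BddBorelNN f → ∀ A, MeasurableSet A →
      Φ (Set.indicator A f) =ᵐ[μ] Set.indicator A (Φ f))
    (m : ℕ) (f g : Fin (m + 1) → Metric.sphere (0 : EuclideanSpace ℝ (Fin n)) 1 → ℝ)
    (hf : ∀ i, BddBorelNN (f i)) (hg : ∀ i, BddBorelNN (g i)) :
    ∃ g₀, BddBorelNN g₀ ∧
      (∀ t, |g₀ t| ≤ ⨆ i, |g i t|) ∧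
      (∀ t, |(⨆ i, f i t) - g₀ t| ≤ ⨆ i, |f i t - g i t|) ∧
      (∀ᵐ t ∂μ, Φ (fun s => ⨆ i, f i s) t - Φ g₀ t ≥ ⨅ i, (Φ (f i) t - Φ (g i) t)) := by
  classical
  set F : Metric.sphere (0 : EuclideanSpace ℝ (Fin n)) 1 → ℝ := fun t => ⨆ i, f i t with hF
  have hFmeas : Measurable F := by
    have heq : F = Finset.univ.sup' Finset.univ_nonempty f := by
      funext t
      rw [hF]
      simp only [Finset.sup'_apply, Finset.sup'_univ_eq_ciSup]
    rw [heq]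
    exact Finset.measurable_sup' _ (fun i _ => (hf i).1)
  -- the set `A i` : points where `f i` attains the sup and `i` is minimal such
  set A : Fin (m + 1) → Set (Metric.sphere (0 : EuclideanSpace ℝ (Fin n)) 1) :=
    fun i => {t | f i t = F t ∧ ∀ j, j < i → f j t ≠ F t} with hA
  have hAmeas : ∀ i, MeasurableSet (A i) := by
    intro i
    have h1 : MeasurableSet {t | f i t = F t} :=
      measurableSet_eq_fun (hf i).1 hFmeas
    have h2 : ∀ j : Fin (m+1), MeasurableSet {t | f j t ≠ F t} := fun j =>
      (measurableSet_eq_fun (hf j).1 hFmeas).compl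
    have : A i = {t | f i t = F t} ∩ ⋂ j ∈ {j | j < i}, {t | f j t ≠ F t} := by
      ext t; simp [hA, Set.mem_setOf_eq]
    rw [this]
    exact h1.inter (MeasurableSet.biInter (Set.to_countable _) fun j _ => h2 j)
  -- every `t` lies in exactly one `A i`
  have hattain : ∀ t, ∃ i, f i t = F t := by
    intro t
    rw [hF]
    obtain ⟨i, hi⟩ := Finite.exists_max (fun i => f i t)
    refine ⟨i, ?_⟩
    show f i t = ⨆ j, f j t
    exact le_antisymm (le_ciSup (f := fun j => f j t)
      (Set.Finite.bddAbove (Set.finite_range _)) i) (ciSup_le hi)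
  have hexists : ∀ t, ∃ i, t ∈ A i := by
    intro t
    set s : Finset (Fin (m+1)) := Finset.univ.filter (fun i => f i t = F t) with hs
    have hne : s.Nonempty := by
      obtain ⟨i, hi⟩ := hattain t
      exact ⟨i, by simp [hs, hi]⟩
    refine ⟨s.min' hne, ?_, ?_⟩
    · have := s.min'_mem hne
      simpa [hs] using this
    · intro j hj hjeq
      have hjs : j ∈ s := by simp [hs, hjeq]
      exact absurd (s.min'_le j hjs) (not_le.mpr hj)
  have hdisj : ∀ i j, i ≠ j → ∀ t, t ∈ A i → t ∉ A j := by
    intro i j hij t hti htj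
    rcases lt_or_gt_of_ne hij with h | h
    · exact htj.2 i h hti.1
    · exact hti.2 j h htj.1
  -- define g₀
  set g₀ : Metric.sphere (0 : EuclideanSpace ℝ (Fin n)) 1 → ℝ :=
    fun t => ∑ i, Set.indicator (A i) (g i) t with hg₀
  have hval : ∀ i, ∀ t ∈ A i, g₀ t = g i t := by
    intro i t ht
    rw [show g₀ t = ∑ j, Set.indicator (A j) (g j) t from rfl, Finset.sum_eq_single i]
    · simp [Set.indicator_of_mem ht]
    · intro j _ hji
      exact Set.indicator_of_notMem (hdisj i j (Ne.symm hji) t ht) _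
    · simp
  have hg₀bb : BddBorelNN g₀ := by
    refine ⟨?_, ?_, ?_⟩
    · exact Finset.measurable_sum _ fun i _ => ((hg i).1).indicator (hAmeas i)
    · obtain ⟨C, hC⟩ := Finite.exists_max (fun i : Fin (m+1) => Classical.choose (hg i).2.1)
      refine ⟨Classical.choose (hg C).2.1 ⊔ 0, fun t => ?_⟩
      obtain ⟨i, hi⟩ := hexists t
      rw [hval i t hi]
      exact le_trans (Classical.choose_spec (hg i).2.1 t)
        (le_trans (hC i) (le_sup_left))
    · intro t
      obtain ⟨i, hi⟩ := hexists t
      rw [hval i t hi]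
      exact (hg i).2.2 t
  refine ⟨g₀, hg₀bb, ?_, ?_, ?_⟩
  · intro t
    obtain ⟨i, hi⟩ := hexists t
    rw [hval i t hi]
    exact le_ciSup (f := fun j => |g j t|) (Set.Finite.bddAbove (Set.finite_range _)) i
  · intro t
    obtain ⟨i, hi⟩ := hexists t
    have h2 : (⨆ j, f j t) = f i t := hi.1.symm
    rw [hval i t hi, h2]
    exact le_ciSup (f := fun j => |f j t - g j t|)
      (Set.Finite.bddAbove (Set.finite_range _)) i
  · -- a.e. statement
    have hFbb : BddBorelNN F := by
      refine ⟨hFmeas, ?_, ?_⟩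
      · obtain ⟨C, hC⟩ := Finite.exists_max (fun i : Fin (m+1) => Classical.choose (hf i).2.1)
        refine ⟨Classical.choose (hf C).2.1 ⊔ 0, fun t => ?_⟩
        exact ciSup_le fun i => le_trans (Classical.choose_spec (hf i).2.1 t)
          (le_trans (hC i) le_sup_left)
      · intro t
        obtain ⟨i, hi⟩ := hattain t
        rw [← hi]; exact (hf i).2.2 t
    -- key a.e. equalities on each A i
    have key : ∀ i : Fin (m+1), ∀ᵐ t ∂μ, t ∈ A i →
        Φ F t = Φ (f i) t ∧ Φ g₀ t = Φ (g i) t := by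
      intro i
      have e1 : Set.indicator (A i) F = Set.indicator (A i) (f i) := by
        funext t
        by_cases ht : t ∈ A i
        · simp [Set.indicator_of_mem ht, ht.1]
        · simp [Set.indicator_of_notMem ht]
      have e2 : Set.indicator (A i) g₀ = Set.indicator (A i) (g i) := by
        funext t
        by_cases ht : t ∈ A i
        · simp [Set.indicator_of_mem ht, hval i t ht]
        · simp [Set.indicator_of_notMem ht]
      have h1 := hΦind F hFbb (A i) (hAmeas i)
      have h2 := hΦind (f i) (hf i) (A i) (hAmeas i)
      have h3 := hΦind g₀ hg₀bb (A i) (hAmeas i)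
      have h4 := hΦind (g i) (hg i) (A i) (hAmeas i)
      rw [e1] at h1
      rw [e2] at h3
      filter_upwards [h1, h2, h3, h4] with t ht1 ht2 ht3 ht4 ht
      constructor
      · have := ht1.symm.trans ht2
        simpa [Set.indicator_of_mem ht] using this
      · have := ht3.symm.trans ht4
        simpa [Set.indicator_of_mem ht] using this
    have hae : ∀ᵐ t ∂μ, ∀ i : Fin (m+1), t ∈ A i →
        Φ F t = Φ (f i) t ∧ Φ g₀ t = Φ (g i) t := ae_all_iff.mpr key
    filter_upwards [hae] with t ht
    obtain ⟨i, hi⟩ := hexists t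
    obtain ⟨e1, e2⟩ := ht i hi
    have : Φ F t - Φ g₀ t = Φ (f i) t - Φ (g i) t := by rw [e1, e2]
    rw [ge_iff_le]
    calc ⨅ j, (Φ (f j) t - Φ (g j) t) ≤ Φ (f i) t - Φ (g i) t :=
          ciInf_le (Set.Finite.bddBelow (Set.finite_range _)) i
      _ = Φ F t - Φ g₀ t := this.symm
end

section
/- Let Ṽ : B(S^{n-1})₊ → ℝ be a continuous valuation with Ṽ(0) = 0, and let μ be a finite Borel measure on S^{n-1} such that the set functions ν_f(A) = Ṽ(f·χ_A) are countably additive and absolutely continuous with respect to μ for every f ∈ B(S^{n-1})₊. Then there exists a map Φ : B(S^{n-1})₊ → L¹(μ), continuous with respect to the sup norm on the domain and the L¹ norm on the codomain, such that Ṽ(f) = ∫_{S^{n-1}} Φ(f) dμ for every f ∈ B(S^{n-1})₊, and moreover Φ(f·χ_A) = Φ(f)·χ_A for every f ∈ B(S^{n-1})₊ and every Borel set A. -/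
open MeasureTheory Filter Topology
open scoped Classical
noncomputable section

section Aux

variable {α : Type*} [MeasurableSpace α]

/-- Generic version of `BddBorelNN`. -/
def BddNN (f : α → ℝ) : Prop :=
  Measurable f ∧ (∃ C : ℝ, ∀ t, f t ≤ C) ∧ ∀ t, 0 ≤ f t

lemma BddNN.indicator {f : α → ℝ} (hf : BddNN f) {A : Set α} (hA : MeasurableSet A) :
    BddNN (Set.indicator A f) := by
  obtain ⟨hm, ⟨C, hC⟩, hpos⟩ := hf
  refine ⟨hm.indicator hA, ⟨max C 0, fun t => ?_⟩,
    fun t => Set.indicator_nonneg (fun t _ => hpos t) t⟩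
  by_cases h : t ∈ A
  · rw [Set.indicator_of_mem h]; exact le_max_of_le_left (hC t)
  · rw [Set.indicator_of_notMem h]; exact le_max_right _ _

lemma BddNN.piecewise {f g : α → ℝ} (hf : BddNN f) (hg : BddNN g) {A : Set α}
    (hA : MeasurableSet A) : BddNN (A.piecewise f g) := by
  obtain ⟨hm, ⟨C, hC⟩, hpos⟩ := hf
  obtain ⟨hm', ⟨C', hC'⟩, hpos'⟩ := hg
  refine ⟨Measurable.piecewise hA hm hm', ⟨max C C', fun t => ?_⟩, fun t => ?_⟩ <;>
    by_cases h : t ∈ A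
  · rw [Set.piecewise_eq_of_mem _ _ _ h]; exact le_max_of_le_left (hC t)
  · rw [Set.piecewise_eq_of_notMem _ _ _ h]; exact le_max_of_le_right (hC' t)
  · rw [Set.piecewise_eq_of_mem _ _ _ h]; exact hpos t
  · rw [Set.piecewise_eq_of_notMem _ _ _ h]; exact hpos' t

/-- Splitting of a valuation along a measurable set:
`V (A.piecewise f g) = V (χ_A f) + V (χ_{Aᶜ} g)` for nonnegative `f, g`. -/
lemma valuation_split {V : (α → ℝ) → ℝ}
    (hval : ∀ f g, BddNN f → BddNN g →
      V (fun t => max (f t) (g t)) + V (fun t => min (f t) (g t)) = V f + V g)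
    (hV0 : V 0 = 0) {f g : α → ℝ} (hf : BddNN f) (hg : BddNN g) {A : Set α}
    (hA : MeasurableSet A) :
    V (A.piecewise f g) = V (Set.indicator A f) + V (Set.indicator Aᶜ g) := by
  have h := hval (Set.indicator A f) (Set.indicator Aᶜ g)
    (hf.indicator hA) (hg.indicator hA.compl)
  have hmax : (fun t => max (Set.indicator A f t) (Set.indicator Aᶜ g t)) = A.piecewise f g := by
    funext t
    by_cases h : t ∈ A
    · simp [Set.indicator_of_mem h, Set.indicator_of_notMem (by simpa using h : t ∉ Aᶜ),
        Set.piecewise_eq_of_mem _ _ _ h, hf.2.2 t]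
    · simp [Set.indicator_of_notMem h, Set.indicator_of_mem (by simpa using h : t ∈ Aᶜ),
        Set.piecewise_eq_of_notMem _ _ _ h, hg.2.2 t]
  have hmin : (fun t => min (Set.indicator A f t) (Set.indicator Aᶜ g t)) = (0 : α → ℝ) := by
    funext t
    by_cases h : t ∈ A
    · simp [Set.indicator_of_mem h, Set.indicator_of_notMem (by simpa using h : t ∉ Aᶜ),
        hf.2.2 t]
    · simp [Set.indicator_of_notMem h, Set.indicator_of_mem (by simpa using h : t ∈ Aᶜ),
        hg.2.2 t]
  rw [hmax, hmin, hV0, add_zero] at h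
  exact h

/-- The key uniform estimate: `|V (χ_A f) - V (χ_A g)| ≤ 2ε` whenever `g` is uniformly `δ`-close
to `f`, where `δ` is the modulus of continuity of `V` at `f` for `ε`. -/
lemma key_est {V : (α → ℝ) → ℝ}
    (hval : ∀ f g, BddNN f → BddNN g →
      V (fun t => max (f t) (g t)) + V (fun t => min (f t) (g t)) = V f + V g)
    (hV0 : V 0 = 0) {f g : α → ℝ} (hf : BddNN f) (hg : BddNN g) {A : Set α}
    (hA : MeasurableSet A) {ε δ : ℝ}
    (hδ : ∀ h, BddNN h → (∀ t, |f t - h t| ≤ δ) → |V f - V h| ≤ ε)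
    (hfg : ∀ t, |f t - g t| ≤ δ) :
    |V (Set.indicator A f) - V (Set.indicator A g)| ≤ 2 * ε := by
  have h1 : V (A.piecewise f g) = V (Set.indicator A f) + V (Set.indicator Aᶜ g) :=
    valuation_split hval hV0 hf hg hA
  have h2 : V (A.piecewise g g) = V (Set.indicator A g) + V (Set.indicator Aᶜ g) :=
    valuation_split hval hV0 hg hg hA
  have hgg : A.piecewise g g = g := by
    funext t; by_cases h : t ∈ A
    · rw [Set.piecewise_eq_of_mem _ _ _ h]
    · rw [Set.piecewise_eq_of_notMem _ _ _ h]
  rw [hgg] at h2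
  have hkey : V (Set.indicator A f) - V (Set.indicator A g) = V (A.piecewise f g) - V g := by
    rw [h1, h2]; ring
  have hclose : ∀ t, |f t - A.piecewise f g t| ≤ δ := by
    intro t; by_cases h : t ∈ A
    · rw [Set.piecewise_eq_of_mem _ _ _ h, sub_self, abs_zero]
      rcases (abs_nonneg (f t - g t)).trans (hfg t) with h'
      exact h'
    · rw [Set.piecewise_eq_of_notMem _ _ _ h]; exact hfg t
  have e1 : |V f - V (A.piecewise f g)| ≤ ε := hδ _ (hf.piecewise hg hA) hclose
  have e2 : |V f - V g| ≤ ε := hδ _ hg hfg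
  calc |V (Set.indicator A f) - V (Set.indicator A g)|
      = |(V f - V g) - (V f - V (A.piecewise f g))| := by rw [hkey]; ring_nf
    _ ≤ |V f - V g| + |V f - V (A.piecewise f g)| := abs_sub _ _
    _ ≤ ε + ε := add_le_add e2 e1
    _ = 2 * ε := by ring

/-- The signed measure `A ↦ V (χ_A f)` associated to a valuation and a function. -/
noncomputable def vmOf (V : (α → ℝ) → ℝ) (f : α → ℝ) (hV0 : V 0 = 0)
    (hca : ∀ A : ℕ → Set α, (∀ i, MeasurableSet (A i)) → Pairwise (Function.onFun Disjoint A) →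
      HasSum (fun i => V (Set.indicator (A i) f)) (V (Set.indicator (⋃ i, A i) f))) :
    MeasureTheory.SignedMeasure α where
  measureOf' A := if MeasurableSet A then V (Set.indicator A f) else 0
  empty' := by
    have : Set.indicator (∅ : Set α) f = (0 : α → ℝ) := Set.indicator_empty f
    simp [this, hV0]
  not_measurable' A h := if_neg h
  m_iUnion' := by
    intro A hA hd
    have h1 : (fun i => if MeasurableSet (A i) then V (Set.indicator (A i) f) else 0) =
        fun i => V (Set.indicator (A i) f) := funext fun i => if_pos (hA i)
    simp only [h1, if_pos (MeasurableSet.iUnion hA)]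
    exact hca A hA hd

lemma vmOf_apply {V : (α → ℝ) → ℝ} {f : α → ℝ} {hV0 : V 0 = 0}
    {hca : ∀ A : ℕ → Set α, (∀ i, MeasurableSet (A i)) →
      Pairwise (Function.onFun Disjoint A) →
      HasSum (fun i => V (Set.indicator (A i) f)) (V (Set.indicator (⋃ i, A i) f))} {A : Set α}
    (hA : MeasurableSet A) : vmOf V f hV0 hca A = V (Set.indicator A f) := by
  show (if MeasurableSet A then V (Set.indicator A f) else 0) = V (Set.indicator A f)
  exact if_pos hA

end Aux

/-- Factorization of a continuous valuation through `L¹(μ)`: there is a continuous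
`Φ : B(S^{n-1})₊ → L¹(μ)` with `Ṽ(f) = ∫ Φ(f) dμ` and `Φ(f χ_A) = Φ(f) χ_A`. -/
theorem stmt6 {n : ℕ} (μ : Measure (Metric.sphere (0 : EuclideanSpace ℝ (Fin n)) 1))
    [IsFiniteMeasure μ]
    (V : (Metric.sphere (0 : EuclideanSpace ℝ (Fin n)) 1 → ℝ) → ℝ)
    (hval : ∀ f g, BddBorelNN f → BddBorelNN g →
      V (fun t => max (f t) (g t)) + V (fun t => min (f t) (g t)) = V f + V g)
    (hcont : ∀ f, BddBorelNN f → ∀ ε > (0:ℝ), ∃ δ > (0:ℝ), ∀ g, BddBorelNN g →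
      (∀ t, |f t - g t| ≤ δ) → |V f - V g| ≤ ε)
    (hV0 : V 0 = 0)
    (hca : ∀ f, BddBorelNN f → ∀ A : ℕ → Set (Metric.sphere (0 : EuclideanSpace ℝ (Fin n)) 1),
      (∀ i, MeasurableSet (A i)) → Pairwise (Function.onFun Disjoint A) →
      HasSum (fun i => V (Set.indicator (A i) f)) (V (Set.indicator (⋃ i, A i) f)))
    (hac : ∀ f, BddBorelNN f → ∀ A, MeasurableSet A → μ A = 0 → V (Set.indicator A f) = 0) :
    ∃ Φ : (Metric.sphere (0 : EuclideanSpace ℝ (Fin n)) 1 → ℝ) →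
        (Metric.sphere (0 : EuclideanSpace ℝ (Fin n)) 1 → ℝ),
      (∀ f, BddBorelNN f → Integrable (Φ f) μ) ∧
      (∀ f, BddBorelNN f → ∀ ε > (0:ℝ), ∃ δ > (0:ℝ), ∀ g, BddBorelNN g →
        (∀ t, |f t - g t| ≤ δ) → ∫ t, |Φ f t - Φ g t| ∂μ ≤ ε) ∧
      (∀ f, BddBorelNN f → V f = ∫ t, Φ f t ∂μ) ∧
      (∀ f, BddBorelNN f → ∀ A, MeasurableSet A →
        Φ (Set.indicator A f) =ᵐ[μ] Set.indicator A (Φ f)) := by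
  classical
  have hBN : ∀ f : Metric.sphere (0 : EuclideanSpace ℝ (Fin n)) 1 → ℝ,
      BddBorelNN f → BddNN f := fun f hf => hf
  set Φ : (Metric.sphere (0 : EuclideanSpace ℝ (Fin n)) 1 → ℝ) →
      (Metric.sphere (0 : EuclideanSpace ℝ (Fin n)) 1 → ℝ) :=
    fun f => if h : BddBorelNN f then
      MeasureTheory.SignedMeasure.rnDeriv (vmOf V f hV0 (hca f h)) μ else 0 with hΦdef
  have hΦ : ∀ f (hf : BddBorelNN f),
      Φ f = MeasureTheory.SignedMeasure.rnDeriv (vmOf V f hV0 (hca f hf)) μ := by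
    intro f hf
    simp only [hΦdef, dif_pos hf]
  -- the Radon–Nikodym identity
  have hwd : ∀ f (hf : BddBorelNN f),
      μ.withDensityᵥ ((vmOf V f hV0 (hca f hf)).rnDeriv μ) = vmOf V f hV0 (hca f hf) := by
    intro f hf
    refine MeasureTheory.SignedMeasure.withDensityᵥ_rnDeriv_eq _ _ ?_
    refine MeasureTheory.VectorMeasure.AbsolutelyContinuous.mk ?_
    intro A hA h0
    rw [Measure.toENNRealVectorMeasure_apply_measurable hA] at h0
    rw [vmOf_apply hA]
    exact hac f hf A hA h0
  -- set integrals of Φ recover the valuation on indicators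
  have hint : ∀ f (hf : BddBorelNN f) (A : _) (hA : MeasurableSet A),
      ∫ t in A, Φ f t ∂μ = V (Set.indicator A f) := by
    intro f hf A hA
    rw [hΦ f hf]
    rw [← withDensityᵥ_apply (MeasureTheory.SignedMeasure.integrable_rnDeriv _ _) hA,
      hwd f hf, vmOf_apply hA]
  have hintg : ∀ f, BddBorelNN f → Integrable (Φ f) μ := by
    intro f hf
    rw [hΦ f hf]
    exact MeasureTheory.SignedMeasure.integrable_rnDeriv _ _
  refine ⟨Φ, hintg, ?_, ?_, ?_⟩
  · -- continuity
    intro f hf ε hε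
    obtain ⟨δ, hδpos, hδ⟩ := hcont f hf (ε / 4) (by positivity)
    refine ⟨δ, hδpos, ?_⟩
    intro g hg hfg
    have hmf : Measurable (Φ f) := by
      rw [hΦ f hf]; exact MeasureTheory.SignedMeasure.measurable_rnDeriv _ _
    have hmg : Measurable (Φ g) := by
      rw [hΦ g hg]; exact MeasureTheory.SignedMeasure.measurable_rnDeriv _ _
    set P : Set (Metric.sphere (0 : EuclideanSpace ℝ (Fin n)) 1) :=
      {t | 0 ≤ Φ f t - Φ g t} with hP
    have hPm : MeasurableSet P := measurableSet_le measurable_const (hmf.sub hmg)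
    have hintsub : Integrable (fun t => Φ f t - Φ g t) μ := (hintg f hf).sub (hintg g hg)
    have habs : Integrable (fun t => |Φ f t - Φ g t|) μ := hintsub.abs
    have hsplit : ∫ t, |Φ f t - Φ g t| ∂μ =
        (∫ t in P, |Φ f t - Φ g t| ∂μ) + ∫ t in Pᶜ, |Φ f t - Φ g t| ∂μ :=
      (integral_add_compl hPm habs).symm
    have hI : ∀ (A : Set (Metric.sphere (0 : EuclideanSpace ℝ (Fin n)) 1)),
        MeasurableSet A → |∫ t in A, (Φ f t - Φ g t) ∂μ| ≤ ε / 2 := by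
      intro A hA
      have : ∫ t in A, (Φ f t - Φ g t) ∂μ = V (Set.indicator A f) - V (Set.indicator A g) := by
        rw [integral_sub (hintg f hf).integrableOn (hintg g hg).integrableOn,
          hint f hf A hA, hint g hg A hA]
      rw [this]
      have := key_est hval hV0 (hBN f hf) (hBN g hg) hA
        (fun h hh hch => hδ h hh hch) hfg
      linarith [this]
    have hP1 : ∫ t in P, |Φ f t - Φ g t| ∂μ = ∫ t in P, (Φ f t - Φ g t) ∂μ := by
      refine setIntegral_congr_fun hPm ?_
      intro t ht
      exact abs_of_nonneg ht
    have hP2 : ∫ t in Pᶜ, |Φ f t - Φ g t| ∂μ = -∫ t in Pᶜ, (Φ f t - Φ g t) ∂μ := by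
      rw [← integral_neg]
      refine setIntegral_congr_fun hPm.compl ?_
      intro t ht
      have : Φ f t - Φ g t < 0 := by
        simp only [hP, Set.mem_compl_iff, Set.mem_setOf_eq, not_le] at ht
        exact ht
      exact abs_of_neg this
    rw [hsplit, hP1, hP2]
    have e1 := hI P hPm
    have e2 := hI Pᶜ hPm.compl
    have := abs_le.1 e1
    have := abs_le.1 e2
    linarith [abs_le.1 e1, abs_le.1 e2]
  · -- integral representation
    intro f hf
    rw [← setIntegral_univ, hint f hf Set.univ MeasurableSet.univ, Set.indicator_univ]
  · -- localization property
    intro f hf A hA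
    have hfA : BddBorelNN (Set.indicator A f) := (hBN f hf).indicator hA
    refine Integrable.ae_eq_of_forall_setIntegral_eq _ _ (hintg _ hfA)
      ((hintg f hf).indicator hA) ?_
    intro B hB _
    rw [hint _ hfA B hB, setIntegral_indicator hA, hint f hf _ (hB.inter hA),
      Set.indicator_indicator]
end
end

section
/- Let μ be a finite Borel measure on S^{n-1} and K : ℝ₊ × S^{n-1} → ℝ a function such that: (a) K(s,·) is Borel measurable for each s ∈ ℝ₊, and K(·,t) is continuous for μ-almost every t; (b) for every λ ∈ ℝ₊ there is G_λ ∈ L¹(μ) with K(s,t) ≤ G_λ(t) for all s < λ and μ-almost every t; and (c) K(s,t) ≥ 0 for all s, t (or more generally |K(s,t)| ≤ G_λ(t) in (b)). Define V(f) = ∫_{S^{n-1}} K(f(t), t) dμ(t) for f ∈ B(S^{n-1})₊. Then V is a radial continuous valuation: V(f∨g) + V(f∧g) = V(f) + V(g) for all f, g ∈ B(S^{n-1})₊, and V is continuous with respect to the supremum norm. -/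
open MeasureTheory Filter Topology

section Aux
variable {α : Type*} [MeasurableSpace α] {μ : Measure α} {K : ℝ → α → ℝ}

lemma aux_meascomp (F : ℕ → α → ℝ) (hF : ∀ k, Measurable (F k)) {N : α → ℕ}
    (hN : Measurable N) : Measurable fun t => F (N t) t := by
  have h1 : Measurable fun p : α × ℕ => F p.2 p.1 :=
    measurable_from_prod_countable_left fun k => hF k
  exact h1.comp (measurable_id.prodMk hN)

/-- Uniform a.e. domination on `[0, lam)` from pointwise-in-`s` domination. -/
lemma aux_dom (hcont : ∀ᵐ t ∂μ, ContinuousOn (fun s => K s t) (Set.Ici (0:ℝ)))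
    (hdom : ∀ lam : ℝ, 0 ≤ lam →
      ∃ G : α → ℝ, Integrable G μ ∧
        ∀ s : ℝ, 0 ≤ s → s < lam → ∀ᵐ t ∂μ, |K s t| ≤ G t)
    (lam : ℝ) (hlam : 0 ≤ lam) :
    ∃ G : α → ℝ, Integrable G μ ∧
      ∀ᵐ t ∂μ, ∀ s : ℝ, 0 ≤ s → s < lam → |K s t| ≤ G t := by
  obtain ⟨G, hG, hbd⟩ := hdom lam hlam
  refine ⟨G, hG, ?_⟩
  have hq : ∀ᵐ t ∂μ, ∀ q : ℚ, 0 ≤ (q:ℝ) → (q:ℝ) < lam → |K (q:ℝ) t| ≤ G t := by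
    rw [ae_all_iff]
    intro q
    by_cases h1 : 0 ≤ (q:ℝ)
    · by_cases h2 : (q:ℝ) < lam
      · filter_upwards [hbd q h1 h2] with t ht _ _ using ht
      · filter_upwards with t _ h using absurd h h2
    · filter_upwards with t h using absurd h h1
  filter_upwards [hcont, hq] with t hct hqt s hs hslam
  -- approximate s from the right by rationals in (s, lam)
  have hseq : ∀ k : ℕ, ∃ q : ℚ, s < (q:ℝ) ∧ (q:ℝ) < min lam (s + 1/(k+1)) := by
    intro k
    apply exists_rat_btwn
    refine lt_min hslam ?_
    have : (0:ℝ) < 1/(k+1) := by positivity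
    linarith
  choose u hu1 hu2 using hseq
  have hu0 : ∀ k, 0 ≤ ((u k : ℝ)) := fun k => le_of_lt (lt_of_le_of_lt hs (hu1 k))
  have hulam : ∀ k, ((u k : ℝ)) < lam := fun k => lt_of_lt_of_le (hu2 k) (min_le_left _ _)
  have htend : Tendsto (fun k => ((u k : ℝ))) atTop (𝓝 s) := by
    have h1 : Tendsto (fun k : ℕ => s + 1/(k+1:ℝ)) atTop (𝓝 (s + 0)) :=
      tendsto_const_nhds.add (tendsto_one_div_add_atTop_nhds_zero_nat)
    rw [add_zero] at h1
    refine tendsto_of_tendsto_of_tendsto_of_le_of_le tendsto_const_nhds h1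
      (fun k => le_of_lt (hu1 k))
      (fun k => le_of_lt (lt_of_lt_of_le (hu2 k) (min_le_right _ _)))
  have htendW : Tendsto (fun k => ((u k : ℝ))) atTop (𝓝[Set.Ici (0:ℝ)] s) :=
    tendsto_nhdsWithin_of_tendsto_nhds_of_eventually_within _ htend
      (Eventually.of_forall hu0)
  have hKt : Tendsto (fun k => K ((u k : ℝ)) t) atTop (𝓝 (K s t)) :=
    (hct s hs).tendsto.comp htendW
  have habs : Tendsto (fun k => |K ((u k : ℝ)) t|) atTop (𝓝 (|K s t|)) :=
    hKt.abs
  exact le_of_tendsto habs (Eventually.of_forall fun k => hqt (u k) (hu0 k) (hulam k))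

/-- A.e. measurability of the composed integrand. -/
lemma aux_aesm (hmeas : ∀ s : ℝ, 0 ≤ s → Measurable (K s))
    (hcont : ∀ᵐ t ∂μ, ContinuousOn (fun s => K s t) (Set.Ici (0:ℝ)))
    {f : α → ℝ} (hf : Measurable f) (hf0 : ∀ t, 0 ≤ f t) :
    AEStronglyMeasurable (fun t => K (f t) t) μ := by
  set φ : ℕ → α → ℝ := fun m t => (⌈f t * 2^m⌉₊ : ℝ) / 2^m with hφ
  have hφmeas : ∀ m, Measurable fun t => K (φ m t) t := by
    intro m
    have hN : Measurable fun t : α => ⌈f t * 2^m⌉₊ :=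
      Nat.measurable_ceil.comp (by fun_prop)
    exact aux_meascomp (fun k t => K ((k:ℝ)/2^m) t)
      (fun k => hmeas _ (by positivity)) hN
  have hφge : ∀ m t, f t ≤ φ m t := by
    intro m t
    rw [hφ]
    rw [le_div_iff₀ (by positivity : (0:ℝ) < 2^m)]
    exact Nat.le_ceil _
  have hφlt : ∀ m t, φ m t < f t + 1/2^m := by
    intro m t
    rw [hφ, div_lt_iff₀ (by positivity : (0:ℝ) < 2^m)]
    have h := Nat.ceil_lt_add_one (mul_nonneg (hf0 t) (by positivity) : (0:ℝ) ≤ f t * 2^m)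
    have h2 : (f t + 1/2^m) * 2^m = f t * 2^m + 1 := by field_simp
    linarith
  have hφtend : ∀ t, Tendsto (fun m => φ m t) atTop (𝓝 (f t)) := by
    intro t
    have h1 : Tendsto (fun m : ℕ => f t + 1/2^m) atTop (𝓝 (f t + 0)) := by
      refine tendsto_const_nhds.add ?_
      simpa [one_div, inv_pow] using tendsto_pow_atTop_nhds_zero_of_lt_one
        (by norm_num : (0:ℝ) ≤ 2⁻¹) (by norm_num : (2:ℝ)⁻¹ < 1)
    rw [add_zero] at h1
    exact tendsto_of_tendsto_of_tendsto_of_le_of_le tendsto_const_nhds h1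
      (fun m => hφge m t) (fun m => le_of_lt (hφlt m t))
  have : AEMeasurable (fun t => K (f t) t) μ := by
    refine aemeasurable_of_tendsto_metrizable_ae atTop
      (fun m => (hφmeas m).aemeasurable) ?_
    filter_upwards [hcont] with t hct
    have hW : Tendsto (fun m => φ m t) atTop (𝓝[Set.Ici (0:ℝ)] (f t)) :=
      tendsto_nhdsWithin_of_tendsto_nhds_of_eventually_within _ (hφtend t)
        (Eventually.of_forall fun m => le_trans (hf0 t) (hφge m t))
    exact (hct (f t) (hf0 t)).tendsto.comp hW
  exact this.aestronglyMeasurable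

end Aux

/-- An integral kernel satisfying the strong Carathéodory condition and the domination
condition defines a radial continuous valuation `V(f) = ∫ K(f(t),t) dμ(t)`. -/
theorem stmt7 {n : ℕ} (μ : Measure (Metric.sphere (0 : EuclideanSpace ℝ (Fin n)) 1))
    [IsFiniteMeasure μ]
    (K : ℝ → Metric.sphere (0 : EuclideanSpace ℝ (Fin n)) 1 → ℝ)
    (hmeas : ∀ s : ℝ, 0 ≤ s → Measurable (K s))
    (hcont : ∀ᵐ t ∂μ, ContinuousOn (fun s => K s t) (Set.Ici (0:ℝ)))
    (hdom : ∀ lam : ℝ, 0 ≤ lam →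
      ∃ G : Metric.sphere (0 : EuclideanSpace ℝ (Fin n)) 1 → ℝ, Integrable G μ ∧
        ∀ s : ℝ, 0 ≤ s → s < lam → ∀ᵐ t ∂μ, |K s t| ≤ G t) :
    (∀ f g, BddBorelNN f → BddBorelNN g →
      (∫ t, K (max (f t) (g t)) t ∂μ) + (∫ t, K (min (f t) (g t)) t ∂μ) =
        (∫ t, K (f t) t ∂μ) + (∫ t, K (g t) t ∂μ)) ∧
    (∀ f, BddBorelNN f → ∀ ε > (0:ℝ), ∃ δ > (0:ℝ), ∀ g, BddBorelNN g →
      (∀ t, |f t - g t| ≤ δ) →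
      |(∫ t, K (f t) t ∂μ) - (∫ t, K (g t) t ∂μ)| ≤ ε) := by
  -- Step 1: integrability of the composed integrand for any `f ∈ B(S^{n-1})₊`.
  have hint : ∀ f, BddBorelNN f → Integrable (fun t => K (f t) t) μ := by
    rintro f ⟨hfm, ⟨C, hC⟩, hf0⟩
    obtain ⟨G, hG, hbd⟩ := aux_dom hcont hdom (max C 0 + 1) (by positivity)
    refine hG.mono' (aux_aesm hmeas hcont hfm hf0) ?_
    filter_upwards [hbd] with t ht
    have h1 : f t < max C 0 + 1 := lt_of_le_of_lt (le_trans (hC t) (le_max_left C 0))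
      (by linarith)
    simpa [Real.norm_eq_abs] using ht (f t) (hf0 t) h1
  constructor
  · -- the valuation property
    intro f g hf hg
    have hmax : BddBorelNN (fun t => max (f t) (g t)) := by
      obtain ⟨Cf, hCf⟩ := hf.2.1
      obtain ⟨Cg, hCg⟩ := hg.2.1
      exact ⟨hf.1.max hg.1, ⟨max Cf Cg, fun t => max_le_max (hCf t) (hCg t)⟩,
        fun t => le_trans (hf.2.2 t) (le_max_left _ _)⟩
    have hmin : BddBorelNN (fun t => min (f t) (g t)) := by
      obtain ⟨Cf, hCf⟩ := hf.2.1
      exact ⟨hf.1.min hg.1, ⟨Cf, fun t => le_trans (min_le_left _ _) (hCf t)⟩,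
        fun t => le_min (hf.2.2 t) (hg.2.2 t)⟩
    rw [← integral_add (hint _ hmax) (hint _ hmin), ← integral_add (hint f hf) (hint g hg)]
    apply integral_congr_ae
    filter_upwards with t
    rcases le_total (f t) (g t) with h | h
    · rw [max_eq_right h, min_eq_left h]; ring
    · rw [max_eq_left h, min_eq_right h]
  · -- continuity
    intro f hf ε hε
    by_contra hcon
    push_neg at hcon
    obtain ⟨C, hC⟩ := hf.2.1
    choose g hg hgle hggt using fun m : ℕ => hcon (1/(m+1:ℝ)) (by positivity)
    obtain ⟨G, hG, hbd⟩ := aux_dom hcont hdom (max C 0 + 2) (by positivity)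
    have hδ1 : ∀ m : ℕ, (1:ℝ)/(m+1) ≤ 1 := by
      intro m
      rw [div_le_one (by positivity)]
      have : (0:ℝ) ≤ (m:ℝ) := Nat.cast_nonneg m
      linarith
    have htend : Tendsto (fun m => ∫ t, K (g m t) t ∂μ) atTop
        (𝓝 (∫ t, K (f t) t ∂μ)) := by
      refine tendsto_integral_of_dominated_convergence G
        (fun m => aux_aesm hmeas hcont (hg m).1 (hg m).2.2) hG ?_ ?_
      · intro m
        filter_upwards [hbd] with t ht
        have habs := abs_le.mp (hgle m t)
        have h1 : g m t < max C 0 + 2 := by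
          have := hC t
          have := le_max_left C 0
          have := hδ1 m
          linarith [habs.1]
        simpa [Real.norm_eq_abs] using ht (g m t) ((hg m).2.2 t) h1
      · filter_upwards [hcont] with t hct
        have hgt : Tendsto (fun m => g m t) atTop (𝓝 (f t)) := by
          have h0 : Tendsto (fun m : ℕ => (1:ℝ)/(m+1)) atTop (𝓝 0) :=
            tendsto_one_div_add_atTop_nhds_zero_nat
          have hlow : Tendsto (fun m : ℕ => f t - 1/(m+1:ℝ)) atTop (𝓝 (f t - 0)) :=
            tendsto_const_nhds.sub h0
          have hhigh : Tendsto (fun m : ℕ => f t + 1/(m+1:ℝ)) atTop (𝓝 (f t + 0)) :=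
            tendsto_const_nhds.add h0
          rw [sub_zero] at hlow; rw [add_zero] at hhigh
          refine tendsto_of_tendsto_of_tendsto_of_le_of_le hlow hhigh ?_ ?_ <;>
            intro m <;> have habs := abs_le.mp (hgle m t) <;> [linarith [habs.2]; linarith [habs.1]]
        have hW : Tendsto (fun m => g m t) atTop (𝓝[Set.Ici (0:ℝ)] (f t)) :=
          tendsto_nhdsWithin_of_tendsto_nhds_of_eventually_within _ hgt
            (Eventually.of_forall fun m => (hg m).2.2 t)
        exact (hct (f t) (hf.2.2 t)).tendsto.comp hW
    rw [Metric.tendsto_atTop] at htend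
    obtain ⟨N, hN⟩ := htend ε hε
    have h1 := hN N le_rfl
    rw [Real.dist_eq, abs_sub_comm] at h1
    exact absurd h1 (not_lt.mpr (le_of_lt (hggt N)))
end

section
/- Let V : C(S^{n-1})₊ → ℝ be a valuation (V(f∨g)+V(f∧g)=V(f)+V(g)) with bounded variation. Then for all f, g, h ∈ C(S^{n-1})₊ with f ≤ g ≤ h, the variation is additive: |V|([f,h]) = |V|([f,g]) + |V|([g,h]). -/
open MeasureTheory Filter Topology

variable {n : ℕ}

/-- The set of chain sums `Σ |V(f_k) − V(f_{k−1})|` over finite increasing chains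
`f = f_0 ≤ f_1 ≤ ⋯ ≤ f_m = g` in `C(S^{n-1})₊`. -/
def chainSums (V : C(Metric.sphere (0 : EuclideanSpace ℝ (Fin n)) 1, ℝ) → ℝ)
    (f g : C(Metric.sphere (0 : EuclideanSpace ℝ (Fin n)) 1, ℝ)) : Set ℝ :=
  {x | ∃ (m : ℕ) (c : ℕ → C(Metric.sphere (0 : EuclideanSpace ℝ (Fin n)) 1, ℝ)),
    c 0 = f ∧ c m = g ∧ (∀ k < m, c k ≤ c (k+1)) ∧ (∀ k ≤ m, 0 ≤ c k) ∧
    x = ∑ k ∈ Finset.range m, |V (c (k+1)) - V (c k)|}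

/-- The variation `|V|([f,g])` of `V` on the order interval `[f,g]`. -/
noncomputable def variation (V : C(Metric.sphere (0 : EuclideanSpace ℝ (Fin n)) 1, ℝ) → ℝ)
    (f g : C(Metric.sphere (0 : EuclideanSpace ℝ (Fin n)) 1, ℝ)) : ℝ :=
  sSup (chainSums V f g)

local notation "F" => C(Metric.sphere (0 : EuclideanSpace ℝ (Fin n)) 1, ℝ)

lemma chainSums_nonempty (V : F → ℝ) (f g : F) (hf : 0 ≤ f) (hg : 0 ≤ g) (hfg : f ≤ g) :
    (chainSums V f g).Nonempty := by
  refine ⟨|V g - V f|, 1, fun k => if k = 0 then f else g, by simp, by simp, ?_, ?_, by simp⟩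
  · intro k hk
    interval_cases k
    simpa using hfg
  · intro k _
    dsimp only
    split <;> assumption

lemma add_mem_chainSums {V : F → ℝ} {f g h : F} {a b : ℝ}
    (ha : a ∈ chainSums V f g) (hb : b ∈ chainSums V g h) : a + b ∈ chainSums V f h := by
  obtain ⟨m1, c1, h10, h1m, h1mono, h1pos, rfl⟩ := ha
  obtain ⟨m2, c2, h20, h2m, h2mono, h2pos, rfl⟩ := hb
  set c : ℕ → F := fun k => if k ≤ m1 then c1 k else c2 (k - m1) with hc
  have hlo : ∀ k ≤ m1, c k = c1 k := by
    intro k hk; simp [hc, hk]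
  have hhi : ∀ k, m1 ≤ k → c k = c2 (k - m1) := by
    intro k hk
    rcases eq_or_lt_of_le hk with rfl | hlt
    · simp [hc, h1m, h20]
    · simp [hc, not_le.mpr hlt]
  refine ⟨m1 + m2, c, (hlo 0 (Nat.zero_le _)).trans h10, ?_, ?_, ?_, ?_⟩
  · rw [hhi _ (Nat.le_add_right _ _)]; simp [h2m]
  · intro k hk
    rcases lt_or_ge k m1 with hk1 | hk1
    · rw [hlo k hk1.le, hlo (k+1) hk1]
      exact h1mono k hk1
    · rw [hhi k hk1, hhi (k+1) (hk1.trans (Nat.le_succ _))]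
      have : k + 1 - m1 = (k - m1) + 1 := by omega
      rw [this]
      exact h2mono (k - m1) (by omega)
  · intro k hk
    rcases le_or_gt k m1 with hk1 | hk1
    · rw [hlo k hk1]; exact h1pos k hk1
    · rw [hhi k hk1.le]; exact h2pos _ (by omega)
  · rw [Finset.sum_range_add]
    congr 1
    · apply Finset.sum_congr rfl
      intro k hk
      rw [Finset.mem_range] at hk
      rw [hlo k hk.le, hlo (k+1) hk]
    · apply Finset.sum_congr rfl
      intro k hk
      rw [Finset.mem_range] at hk
      have e1 : m1 + k - m1 = k := by omega
      have e2 : m1 + k + 1 - m1 = k + 1 := by omega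
      rw [hhi (m1 + k) (Nat.le_add_right _ _), hhi (m1 + k + 1) (by omega), e1, e2]

/-- Additivity of the variation: `|V|([f,h]) = |V|([f,g]) + |V|([g,h])` for `f ≤ g ≤ h`. -/
theorem stmt8 (V : C(Metric.sphere (0 : EuclideanSpace ℝ (Fin n)) 1, ℝ) → ℝ)
    (hval : ∀ f g, 0 ≤ f → 0 ≤ g → V (f ⊔ g) + V (f ⊓ g) = V f + V g)
    (hbv : ∀ f g, 0 ≤ f → f ≤ g → BddAbove (chainSums V f g))
    (f g h : C(Metric.sphere (0 : EuclideanSpace ℝ (Fin n)) 1, ℝ))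
    (hf : 0 ≤ f) (hfg : f ≤ g) (hgh : g ≤ h) :
    variation V f h = variation V f g + variation V g h := by
  have hg : (0 : F) ≤ g := hf.trans hfg
  have hh : (0 : F) ≤ h := hg.trans hgh
  have hfh : f ≤ h := hfg.trans hgh
  have neA := chainSums_nonempty V f g hf hg hfg
  have neB := chainSums_nonempty V g h hg hh hgh
  have neC := chainSums_nonempty V f h hf hh hfh
  have bdA := hbv f g hf hfg
  have bdB := hbv g h hg hgh
  have bdC := hbv f h hf hfh
  apply le_antisymm
  · -- sSup C ≤ sSup A + sSup B
    apply csSup_le neC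
    rintro x ⟨m, c, hc0, hcm, hmono, hpos, rfl⟩
    have key : ∀ k < m, |V (c (k+1)) - V (c k)| ≤
        |V (c (k+1) ⊓ g) - V (c k ⊓ g)| + |V (c (k+1) ⊔ g) - V (c k ⊔ g)| := by
      intro k hk
      have e1 := hval (c k) g (hpos k hk.le) hg
      have e2 := hval (c (k+1)) g (hpos (k+1) hk) hg
      have : V (c (k+1)) - V (c k) =
          (V (c (k+1) ⊓ g) - V (c k ⊓ g)) + (V (c (k+1) ⊔ g) - V (c k ⊔ g)) := by
        linarith
      rw [this]
      exact abs_add_le _ _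
    have hsum : ∑ k ∈ Finset.range m, |V (c (k+1)) - V (c k)| ≤
        (∑ k ∈ Finset.range m, |V (c (k+1) ⊓ g) - V (c k ⊓ g)|) +
        ∑ k ∈ Finset.range m, |V (c (k+1) ⊔ g) - V (c k ⊔ g)| := by
      rw [← Finset.sum_add_distrib]
      exact Finset.sum_le_sum fun k hk => key k (Finset.mem_range.mp hk)
    have hA : (∑ k ∈ Finset.range m, |V (c (k+1) ⊓ g) - V (c k ⊓ g)|) ∈ chainSums V f g := by
      refine ⟨m, fun k => c k ⊓ g, ?_, ?_, ?_, ?_, rfl⟩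
      · show c 0 ⊓ g = f; rw [hc0]; exact inf_eq_left.mpr hfg
      · show c m ⊓ g = g; rw [hcm]; exact inf_eq_right.mpr hgh
      · intro k hk; exact inf_le_inf_right g (hmono k hk)
      · intro k hk; exact le_inf (hpos k hk) hg
    have hB : (∑ k ∈ Finset.range m, |V (c (k+1) ⊔ g) - V (c k ⊔ g)|) ∈ chainSums V g h := by
      refine ⟨m, fun k => c k ⊔ g, ?_, ?_, ?_, ?_, rfl⟩
      · show c 0 ⊔ g = g; rw [hc0]; exact sup_eq_right.mpr hfg
      · show c m ⊔ g = h; rw [hcm]; exact sup_eq_left.mpr hgh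
      · intro k hk; exact sup_le_sup_right (hmono k hk) g
      · intro k hk; exact hg.trans le_sup_right
    calc ∑ k ∈ Finset.range m, |V (c (k+1)) - V (c k)| ≤ _ := hsum
      _ ≤ variation V f g + variation V g h :=
        add_le_add (le_csSup bdA hA) (le_csSup bdB hB)
  · -- sSup A + sSup B ≤ sSup C
    have key : ∀ a ∈ chainSums V f g, ∀ b ∈ chainSums V g h, a + b ≤ variation V f h :=
      fun a ha b hb => le_csSup bdC (add_mem_chainSums ha hb)
    have h1 : ∀ b ∈ chainSums V g h, variation V f g + b ≤ variation V f h := by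
      intro b hb
      have : variation V f g ≤ variation V f h - b :=
        csSup_le neA fun a ha => by linarith [key a ha b hb]
      linarith
    have : variation V g h ≤ variation V f h - variation V f g :=
      csSup_le neB fun b hb => by linarith [h1 b hb]
    linarith
end

section
/- Let V : C(S^{n-1})₊ → ℝ be a valuation with bounded variation. Then the variation function |V|(f) = |V|([0,f]) is monotone increasing: f ≤ g implies |V|(f) ≤ |V|(g). Moreover, V(g) − V(f) ≤ |V|(g) − |V|(f) for f ≤ g, so that |V| − V is monotone increasing and V = |V| − (|V| − V) is a difference of two monotone increasing valuations. -/
open MeasureTheory Filter Topology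

variable {n : ℕ}

/-- The variation function `|V|(f) = |V|([0,f])` is monotone increasing, and
`V(g) − V(f) ≤ |V|(g) − |V|(f)` for `f ≤ g`, so `|V| − V` is monotone increasing as well. -/
theorem stmt10 (V : C(Metric.sphere (0 : EuclideanSpace ℝ (Fin n)) 1, ℝ) → ℝ)
    (hval : ∀ f g, 0 ≤ f → 0 ≤ g → V (f ⊔ g) + V (f ⊓ g) = V f + V g)
    (hbv : ∀ f g, 0 ≤ f → f ≤ g → BddAbove (chainSums V f g))
    (f g : C(Metric.sphere (0 : EuclideanSpace ℝ (Fin n)) 1, ℝ))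
    (hf : 0 ≤ f) (hfg : f ≤ g) :
    variation V 0 f ≤ variation V 0 g ∧
    V g - V f ≤ variation V 0 g - variation V 0 f ∧
    variation V 0 f - V f ≤ variation V 0 g - V g := by
  -- Key: appending the step `f ≤ g` to a chain from `0` to `f` gives a chain from `0` to `g`.
  have hg : (0 : C(Metric.sphere (0 : EuclideanSpace ℝ (Fin n)) 1, ℝ)) ≤ g := hf.trans hfg
  have hne : (chainSums V 0 f).Nonempty := by
    refine ⟨|V f - V 0|, 1, fun k => if k = 0 then 0 else f, ?_, ?_, ?_, ?_, ?_⟩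
    · simp
    · simp
    · intro k hk; interval_cases k; simpa using hf
    · intro k hk; interval_cases k <;> simp [hf]
    · simp
  have hAbdd : BddAbove (chainSums V 0 f) := hbv 0 f le_rfl hf
  have hBbdd : BddAbove (chainSums V 0 g) := hbv 0 g le_rfl hg
  have key : ∀ x ∈ chainSums V 0 f, x + |V g - V f| ∈ chainSums V 0 g := by
    rintro x ⟨m, c, hc0, hcm, hstep, hpos, hx⟩
    refine ⟨m + 1, fun k => if k ≤ m then c k else g, by simp [hc0], by simp, ?_, ?_, ?_⟩
    · intro k hk
      rcases lt_or_eq_of_le (Nat.lt_succ_iff.mp hk) with h | h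
      · simp only [h.le, h, if_pos, Nat.succ_le_of_lt h]
        simpa [h.le, Nat.succ_le_of_lt h] using hstep k h
      · subst h
        simpa [hcm] using hfg
    · intro k hk
      rcases le_or_gt k m with h | h
      · simpa [h] using hpos k h
      · simpa [Nat.not_le.mpr h] using hg
    · rw [Finset.sum_range_succ]
      have : ∀ k ∈ Finset.range m,
          |V (if k + 1 ≤ m then c (k+1) else g) - V (if k ≤ m then c k else g)|
            = |V (c (k+1)) - V (c k)| := by
        intro k hk
        have hk' := Finset.mem_range.mp hk
        simp [Nat.succ_le_of_lt hk', hk'.le]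
      rw [Finset.sum_congr rfl this, ← hx]
      simp [hcm]
  have hmain : variation V 0 f + |V g - V f| ≤ variation V 0 g := by
    have : variation V 0 f ≤ variation V 0 g - |V g - V f| := by
      unfold variation
      apply csSup_le hne
      intro x hx
      have := le_csSup hBbdd (key x hx)
      linarith
    linarith
  have habs : V g - V f ≤ |V g - V f| := le_abs_self _
  have habs0 : (0:ℝ) ≤ |V g - V f| := abs_nonneg _
  refine ⟨by linarith, by linarith, by linarith⟩
end

section
/- Let V : C(S^{n-1})₊ → ℝ be a valuation that is continuous with respect to the supremum norm, uniformly continuous on bounded sets, and of bounded variation. Then the variation function |V|(f) = |V|([0,f]) is continuous with respect to the supremum norm on C(S^{n-1})₊. -/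
open MeasureTheory Filter Topology

variable {n : ℕ}

abbrev EE (n : ℕ) := C(Metric.sphere (0 : EuclideanSpace ℝ (Fin n)) 1, ℝ)

namespace Aux

variable (V : EE n → ℝ)

theorem mem_chainSums {f g : EE n} {m : ℕ} {c : ℕ → EE n}
    (h0 : c 0 = f) (hm : c m = g) (hmono : ∀ k < m, c k ≤ c (k+1))
    (hpos : ∀ k ≤ m, 0 ≤ c k) :
    (∑ k ∈ Finset.range m, |V (c (k+1)) - V (c k)|) ∈ chainSums V f g :=
  ⟨m, c, h0, hm, hmono, hpos, rfl⟩

theorem chainSums_nonneg {f g : EE n} {S : ℝ} (hS : S ∈ chainSums V f g) : 0 ≤ S := by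
  obtain ⟨m, c, -, -, -, -, rfl⟩ := hS
  exact Finset.sum_nonneg fun k _ => abs_nonneg _

theorem chainSums_nonempty {f g : EE n} (hf : 0 ≤ f) (hfg : f ≤ g) :
    (chainSums V f g).Nonempty := by
  refine ⟨_, mem_chainSums V (m := 1) (c := fun k => if k = 0 then f else g) rfl rfl ?_ ?_⟩
  · intro k hk
    interval_cases k
    simpa using hfg
  · intro k _
    by_cases h : k = 0 <;> simp [h, hf, hf.trans hfg]

theorem chainSums_append {f g g' : EE n} (hg' : g ≤ g') {S : ℝ}
    (hS : S ∈ chainSums V f g) : ∃ S' ∈ chainSums V f g', S ≤ S' := by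
  obtain ⟨m, c, h0, hm, hmono, hpos, rfl⟩ := hS
  have hg0 : 0 ≤ g := hm ▸ hpos m le_rfl
  refine ⟨_, mem_chainSums V (m := m + 1) (c := fun k => if k ≤ m then c k else g') ?_ ?_ ?_ ?_, ?_⟩
  · simpa using h0
  · simp
  · intro k hk
    rcases Nat.lt_or_ge k m with h | h
    · simp only [if_pos h.le, if_pos (Nat.succ_le_of_lt h)]
      exact hmono k h
    · have hk' : k = m := le_antisymm (Nat.lt_succ_iff.mp hk) h
      subst hk'
      simp [hm, hg']
  · intro k hk
    by_cases h : k ≤ m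
    · simp [h, hpos k h]
    · have : (0 : EE n) ≤ g' := le_trans (hm ▸ hpos m le_rfl) hg'
      simp [h, this]
  · rw [Finset.sum_range_succ]
    have : ∀ k ∈ Finset.range m,
        |V (if k + 1 ≤ m then c (k+1) else g') - V (if k ≤ m then c k else g')|
          = |V (c (k+1)) - V (c k)| := by
      intro k hk
      rw [Finset.mem_range] at hk
      rw [if_pos (Nat.succ_le_of_lt hk), if_pos hk.le]
    rw [Finset.sum_congr rfl this]
    have : (0:ℝ) ≤ |V (if m + 1 ≤ m then c (m+1) else g') - V (if m ≤ m then c m else g')| :=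
      abs_nonneg _
    linarith

theorem chainSums_prepend {f f' g : EE n} (hf' : 0 ≤ f') (hf'f : f' ≤ f) {S : ℝ}
    (hS : S ∈ chainSums V f g) : ∃ S' ∈ chainSums V f' g, S ≤ S' := by
  obtain ⟨m, c, h0, hm, hmono, hpos, rfl⟩ := hS
  refine ⟨_, mem_chainSums V (m := m + 1) (c := fun k => if k = 0 then f' else c (k - 1)) ?_ ?_ ?_ ?_, ?_⟩
  · simp
  · simp [hm]
  · intro k hk
    rcases Nat.eq_zero_or_pos k with h | h
    · subst h
      simpa [h0] using hf'f
    · have : k ≠ 0 := h.ne'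
      simp only [this, if_neg, Nat.succ_ne_zero, if_neg (Nat.succ_ne_zero k)]
      have : k - 1 + 1 = k := Nat.succ_pred_eq_of_pos h
      rw [show k + 1 - 1 = (k-1) + 1 by omega]
      exact hmono (k-1) (by omega)
  · intro k hk
    by_cases h : k = 0
    · simp [h, hf']
    · simp only [h, if_neg]
      exact hpos (k-1) (by omega)
  · rw [Finset.sum_range_succ']
    have : ∀ k ∈ Finset.range m,
        |V (if k + 1 + 1 = 0 then f' else c (k + 1 + 1 - 1)) -
          V (if k + 1 = 0 then f' else c (k + 1 - 1))| = |V (c (k+1)) - V (c k)| := by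
      intro k _
      simp
    rw [Finset.sum_congr rfl this]
    have : (0:ℝ) ≤ |V (if 0 + 1 = 0 then f' else c (0 + 1 - 1)) - V (if (0:ℕ) = 0 then f' else c 0)| :=
      abs_nonneg _
    linarith


theorem chainSums_concat {f g d : EE n} {S1 S2 : ℝ}
    (h1 : S1 ∈ chainSums V f g) (h2 : S2 ∈ chainSums V g d) :
    S1 + S2 ∈ chainSums V f d := by
  obtain ⟨m1, c1, h10, h1m, h1mono, h1pos, rfl⟩ := h1
  obtain ⟨m2, c2, h20, h2m, h2mono, h2pos, rfl⟩ := h2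
  set e : ℕ → EE n := fun k => if k < m1 then c1 k else c2 (k - m1) with he
  have key : ∀ k, m1 ≤ k → e k = c2 (k - m1) := by
    intro k hk; rw [he]; exact if_neg (by omega)
  have key1 : ∀ k, k ≤ m1 → e k = c1 k := by
    intro k hk
    rcases Nat.lt_or_ge k m1 with h | h
    · exact if_pos h
    · have : k = m1 := by omega
      subst this
      rw [key k le_rfl]
      rw [show k - k = 0 by omega, h20, h1m]
  have hsum := mem_chainSums V (m := m1 + m2) (c := e) (f := f) (g := d) ?_ ?_ ?_ ?_
  · convert hsum using 1
    rw [Finset.sum_range_add]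
    congr 1
    · refine Finset.sum_congr rfl fun k hk => ?_
      rw [Finset.mem_range] at hk
      rw [key1 _ (by omega), key1 _ (by omega)]
    · refine Finset.sum_congr rfl fun k hk => ?_
      rw [Finset.mem_range] at hk
      rw [key (m1 + k + 1) (by omega), key (m1 + k) (by omega),
        show m1 + k + 1 - m1 = k + 1 by omega, show m1 + k - m1 = k by omega]
  · rw [key1 0 (by omega), h10]
  · rw [key _ (by omega), show m1 + m2 - m1 = m2 by omega, h2m]
  · intro k hk
    rcases Nat.lt_or_ge k m1 with h | h
    · rw [key1 _ (by omega), key1 _ (by omega)]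
      exact h1mono k h
    · rw [key _ h, key _ (by omega), show k + 1 - m1 = (k - m1) + 1 by omega]
      exact h2mono (k - m1) (by omega)
  · intro k hk
    rcases Nat.lt_or_ge k m1 with h | h
    · rw [key1 _ (by omega)]; exact h1pos k (by omega)
    · rw [key _ h]; exact h2pos (k - m1) (by omega)

theorem chainSums_split {f g p : EE n} (hp : 0 ≤ p) {S : ℝ}
    (hval : ∀ f g : EE n, 0 ≤ f → 0 ≤ g → V (f ⊔ g) + V (f ⊓ g) = V f + V g)
    (hS : S ∈ chainSums V f g) :
    ∃ S1 ∈ chainSums V (f ⊓ p) (g ⊓ p), ∃ S2 ∈ chainSums V (f ⊔ p) (g ⊔ p), S ≤ S1 + S2 := by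
  obtain ⟨m, c, h0, hm, hmono, hpos, rfl⟩ := hS
  refine ⟨_, mem_chainSums V (m := m) (c := fun k => c k ⊓ p) (by simp only [h0])
      (by simp only [hm])
      (fun k hk => inf_le_inf_right p (hmono k hk)) (fun k hk => le_inf (hpos k hk) hp), _,
    mem_chainSums V (m := m) (c := fun k => c k ⊔ p) (by simp only [h0]) (by simp only [hm])
      (fun k hk => sup_le_sup_right (hmono k hk) p)
      (fun k hk => le_trans (hpos k hk) le_sup_left), ?_⟩
  rw [← Finset.sum_add_distrib]
  refine Finset.sum_le_sum fun k hk => ?_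
  rw [Finset.mem_range] at hk
  have e1 := hval (c (k+1)) p (hpos (k+1) (by omega)) hp
  have e2 := hval (c k) p (hpos k (by omega)) hp
  have hiden : V (c (k+1)) - V (c k) =
      (V (c (k+1) ⊓ p) - V (c k ⊓ p)) + (V (c (k+1) ⊔ p) - V (c k ⊔ p)) := by linarith
  rw [hiden]
  have := abs_add_le (V (c (k+1) ⊓ p) - V (c k ⊓ p)) (V (c (k+1) ⊔ p) - V (c k ⊔ p))
  linarith


noncomputable def cst (t : ℝ) : EE n := ContinuousMap.const _ t

@[simp] theorem cst_apply (t : ℝ) (x : Metric.sphere (0 : EuclideanSpace ℝ (Fin n)) 1) :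
    cst (n := n) t x = t := rfl

theorem minDelta
    (hcont : ∀ f : EE n, 0 ≤ f → ∀ ε > (0:ℝ), ∃ δ > (0:ℝ), ∀ g, 0 ≤ g →
      (∀ t, |f t - g t| ≤ δ) → |V f - V g| ≤ ε)
    (c : ℕ → EE n) (e : ℝ) (he : 0 < e) :
    ∀ m, (∀ k ≤ m, 0 ≤ c k) → ∃ η > (0:ℝ), ∀ k ≤ m, ∀ g : EE n, 0 ≤ g →
      (∀ x, |c k x - g x| ≤ η) → |V (c k) - V g| ≤ e := by
  intro m
  induction m with
  | zero =>
    intro hpos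
    obtain ⟨δ, hδ, h⟩ := hcont (c 0) (hpos 0 le_rfl) e he
    exact ⟨δ, hδ, fun k hk => by
      have : k = 0 := Nat.le_zero.mp hk
      subst this; exact h⟩
  | succ m ih =>
    intro hpos
    obtain ⟨η, hη, h1⟩ := ih (fun k hk => hpos k (hk.trans (Nat.le_succ m)))
    obtain ⟨δ, hδ, h2⟩ := hcont (c (m+1)) (hpos (m+1) le_rfl) e he
    refine ⟨min η δ, lt_min hη hδ, fun k hk g hg hclose => ?_⟩
    rcases Nat.lt_or_ge k (m+1) with h | h
    · exact h1 k (by omega) g hg (fun x => (hclose x).trans (min_le_left _ _))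
    · have : k = m + 1 := by omega
      subst this
      exact h2 g hg fun x => (hclose x).trans (min_le_right _ _)

theorem B1
    (hcont : ∀ f : EE n, 0 ≤ f → ∀ ε > (0:ℝ), ∃ δ > (0:ℝ), ∀ g, 0 ≤ g →
      (∀ t, |f t - g t| ≤ δ) → |V f - V g| ≤ ε)
    (hbv : ∀ f g : EE n, 0 ≤ f → f ≤ g → BddAbove (chainSums V f g))
    {f : EE n} (hf : 0 ≤ f) {ε : ℝ} (hε : 0 < ε) :
    ∃ δ, 0 < δ ∧ δ ≤ 1 ∧ ∀ S ∈ chainSums V f (f + cst δ), S ≤ ε := by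
  by_contra hcon
  push_neg at hcon
  have key : ∀ N : ℕ, ∀ β : ℝ, 0 < β → β ≤ 1 → ∃ t, 0 < t ∧ t ≤ β ∧
      ∃ S ∈ chainSums V f (f + cst t), (N : ℝ) * (ε/2) ≤ S := by
    intro N
    induction N with
    | zero =>
      intro β hβ hβ1
      have hle : f ≤ f + cst β := by
        rw [ContinuousMap.le_def]; intro x
        simp only [ContinuousMap.add_apply, cst_apply]
        linarith
      obtain ⟨S, hS⟩ := chainSums_nonempty V hf hle
      exact ⟨β, hβ, le_rfl, S, hS, by simpa using chainSums_nonneg V hS⟩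
    | succ N ih =>
      intro β hβ hβ1
      obtain ⟨S, hS, hεS⟩ := hcon (β/2) (by positivity) (by linarith)
      obtain ⟨m, c, h0, hm, hmono, hpos, rfl⟩ := hS
      set e : ℝ := ε / (4 * ((m:ℝ) + 1)) with hedef
      have he : 0 < e := by positivity
      obtain ⟨η, hη, hηs⟩ := minDelta V hcont c e he m hpos
      obtain ⟨t, ht0, htβ, S', hS', hNS'⟩ := ih (min η (β/2)) (by positivity)
        (le_trans (min_le_right _ _) (by linarith))
      have htη : t ≤ η := htβ.trans (min_le_left _ _)
      have htβ2 : t ≤ β/2 := htβ.trans (min_le_right _ _)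
      -- translated chain
      have hcstpos : (0 : EE n) ≤ cst (n := n) t := by
        rw [ContinuousMap.le_def]; intro x; simp [ht0.le]
      have hmem := mem_chainSums V (m := m) (c := fun k => c k + cst t)
        (f := f + cst t) (g := f + cst (t + β/2))
        (by rw [h0]) (by rw [hm]; ext x; simp; ring)
        (fun k hk => by
          rw [ContinuousMap.le_def]; intro x
          simp only [ContinuousMap.add_apply, cst_apply]
          exact add_le_add_left (ContinuousMap.le_def.mp (hmono k hk) x) t)
        (fun k hk => by
          rw [ContinuousMap.le_def]; intro x
          simp only [ContinuousMap.add_apply, cst_apply, ContinuousMap.zero_apply]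
          have := ContinuousMap.le_def.mp (hpos k hk) x
          simp only [ContinuousMap.zero_apply] at this
          linarith)
      have hterm : ∀ k ∈ Finset.range m,
          |V (c (k+1)) - V (c k)| - 2*e ≤ |V (c (k+1) + cst t) - V (c k + cst t)| := by
        intro k hk
        rw [Finset.mem_range] at hk
        have hc1 : ∀ j, j ≤ m → |V (c j) - V (c j + cst t)| ≤ e := by
          intro j hj
          refine hηs j hj (c j + cst t) ?_ ?_
          · rw [ContinuousMap.le_def]; intro x
            simp only [ContinuousMap.add_apply, cst_apply, ContinuousMap.zero_apply]
            have := ContinuousMap.le_def.mp (hpos j hj) x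
            simp only [ContinuousMap.zero_apply] at this
            linarith
          · intro x
            simp only [ContinuousMap.add_apply, cst_apply]
            rw [show c j x - (c j x + t) = -t by ring, abs_neg, abs_of_nonneg ht0.le]
            exact htη
        have h1 := hc1 (k+1) (by omega)
        have h2 := hc1 k (by omega)
        set X := V (c (k+1)); set X' := V (c (k+1) + cst t)
        set Y := V (c k); set Y' := V (c k + cst t)
        have t1 : |X - Y| - |X' - Y'| ≤ |(X - Y) - (X' - Y')| := abs_sub_abs_le_abs_sub _ _
        have t2 : |(X - Y) - (X' - Y')| = |(X - X') + (Y' - Y)| := by ring_nf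
        have t3 : |(X - X') + (Y' - Y)| ≤ |X - X'| + |Y' - Y| := abs_add_le _ _
        have t4 : |Y' - Y| = |Y - Y'| := abs_sub_comm _ _
        linarith
      have hsum : (∑ k ∈ Finset.range m, |V (c (k+1)) - V (c k)|) - (m:ℝ) * (2*e) ≤
          ∑ k ∈ Finset.range m, |V (c (k+1) + cst t) - V (c k + cst t)| := by
        have := Finset.sum_le_sum hterm
        rw [Finset.sum_sub_distrib, Finset.sum_const, Finset.card_range] at this
        simpa [nsmul_eq_mul] using this
      have hme : (m:ℝ) * (2*e) ≤ ε/2 := by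
        have h4 : e * (4*((m:ℝ)+1)) = ε := by
          rw [hedef]; field_simp
        nlinarith [he.le, (Nat.cast_nonneg m : (0:ℝ) ≤ (m:ℝ))]
      have hconcat := chainSums_concat V hS' hmem
      refine ⟨t + β/2, by linarith, by linarith, _, hconcat, ?_⟩
      push_cast
      have hεS' : ε/2 ≤ (∑ k ∈ Finset.range m, |V (c (k+1) + cst t) - V (c k + cst t)|) := by
        linarith
      nlinarith [hNS']
  -- contradiction
  obtain ⟨M, hM⟩ := hbv f (f + cst 1) hf (by
    rw [ContinuousMap.le_def]; intro x
    simp only [ContinuousMap.add_apply, cst_apply]; linarith)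
  obtain ⟨N, hN⟩ := exists_nat_gt ((M + 1) / (ε/2))
  obtain ⟨t, ht0, ht1, S, hS, hNS⟩ := key N 1 one_pos le_rfl
  obtain ⟨S', hS', hSS'⟩ := chainSums_append V (show f + cst t ≤ f + cst 1 by
    rw [ContinuousMap.le_def]; intro x
    simp only [ContinuousMap.add_apply, cst_apply]; linarith) hS
  have hSM : S' ≤ M := hM hS'
  have : (M + 1) < (N : ℝ) * (ε/2) := (div_lt_iff₀ (by positivity)).mp hN
  linarith


/-- `lo f t = (f - t) ⊔ 0`. -/
noncomputable def lo (f : EE n) (t : ℝ) : EE n := (f - cst t) ⊔ 0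

@[simp] theorem lo_apply (f : EE n) (t : ℝ) (x : Metric.sphere (0 : EuclideanSpace ℝ (Fin n)) 1) :
    lo f t x = max (f x - t) 0 := rfl

theorem lo_nonneg (f : EE n) (t : ℝ) : 0 ≤ lo f t := by
  rw [ContinuousMap.le_def]; intro x
  simp [le_max_right]

theorem lo_le (f : EE n) {t : ℝ} (hf : 0 ≤ f) (ht : 0 ≤ t) : lo f t ≤ f := by
  rw [ContinuousMap.le_def]; intro x
  have := ContinuousMap.le_def.mp hf x
  simp only [ContinuousMap.zero_apply] at this
  simp only [lo_apply]
  exact max_le (by linarith) this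

theorem max_shift (a t s : ℝ) (ht : 0 ≤ s) : max (max (a - t) 0 - s) 0 = max (a - (t + s)) 0 := by
  rcases le_total (a - t) 0 with h | h
  · rw [max_eq_right h, max_eq_right (by linarith), max_eq_right (by linarith)]
  · rw [max_eq_left h]
    congr 1
    ring

theorem abs_max_shift {a s : ℝ} (ha : 0 ≤ a) (hs : 0 ≤ s) : |a - max (a - s) 0| ≤ s := by
  have h1 : max (a - s) 0 ≤ a := max_le (by linarith) ha
  have h2 : a - s ≤ max (a - s) 0 := le_max_left _ _
  rw [abs_le]
  constructor <;> linarith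

theorem B2
    (hcont : ∀ f : EE n, 0 ≤ f → ∀ ε > (0:ℝ), ∃ δ > (0:ℝ), ∀ g, 0 ≤ g →
      (∀ t, |f t - g t| ≤ δ) → |V f - V g| ≤ ε)
    (hbv : ∀ f g : EE n, 0 ≤ f → f ≤ g → BddAbove (chainSums V f g))
    {f : EE n} (hf : 0 ≤ f) {ε : ℝ} (hε : 0 < ε) :
    ∃ δ, 0 < δ ∧ δ ≤ 1 ∧ ∀ S ∈ chainSums V (lo f δ) f, S ≤ ε := by
  by_contra hcon
  push_neg at hcon
  have key : ∀ N : ℕ, ∀ β : ℝ, 0 < β → β ≤ 1 → ∃ t, 0 < t ∧ t ≤ β ∧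
      ∃ S ∈ chainSums V (lo f t) f, (N : ℝ) * (ε/2) ≤ S := by
    intro N
    induction N with
    | zero =>
      intro β hβ hβ1
      obtain ⟨S, hS⟩ := chainSums_nonempty V (lo_nonneg f β) (lo_le f hf hβ.le)
      exact ⟨β, hβ, le_rfl, S, hS, by simpa using chainSums_nonneg V hS⟩
    | succ N ih =>
      intro β hβ hβ1
      obtain ⟨S, hS, hεS⟩ := hcon (β/2) (by positivity) (by linarith)
      obtain ⟨m, c, h0, hm, hmono, hpos, rfl⟩ := hS
      set e : ℝ := ε / (4 * ((m:ℝ) + 1)) with hedef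
      have he : 0 < e := by positivity
      obtain ⟨η, hη, hηs⟩ := minDelta V hcont c e he m hpos
      obtain ⟨t, ht0, htβ, S', hS', hNS'⟩ := ih (min η (β/2)) (by positivity)
        (le_trans (min_le_right _ _) (by linarith))
      have htη : t ≤ η := htβ.trans (min_le_left _ _)
      have htβ2 : t ≤ β/2 := htβ.trans (min_le_right _ _)
      -- lowered chain : c' k = (c k - cst t) ⊔ 0, from lo f (t + β/2) to lo f t
      have hmem := mem_chainSums V (m := m) (c := fun k => (c k - cst t) ⊔ 0)
        (f := lo f (β/2 + t)) (g := lo f t)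
        (by rw [h0]; ext x; simp [max_shift _ _ _ ht0.le])
        (by rw [hm]; rfl)
        (fun k hk => by
          rw [ContinuousMap.le_def]; intro x
          simp only [ContinuousMap.sup_apply, ContinuousMap.sub_apply, cst_apply,
            ContinuousMap.zero_apply]
          have := ContinuousMap.le_def.mp (hmono k hk) x
          exact max_le_max (by linarith) le_rfl)
        (fun k hk => by
          rw [ContinuousMap.le_def]; intro x
          simp [le_max_right])
      have hterm : ∀ k ∈ Finset.range m,
          |V (c (k+1)) - V (c k)| - 2*e ≤
            |V ((c (k+1) - cst t) ⊔ 0) - V ((c k - cst t) ⊔ 0)| := by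
        intro k hk
        rw [Finset.mem_range] at hk
        have hc1 : ∀ j, j ≤ m → |V (c j) - V ((c j - cst t) ⊔ 0)| ≤ e := by
          intro j hj
          refine hηs j hj ((c j - cst t) ⊔ 0) ?_ ?_
          · rw [ContinuousMap.le_def]; intro x
            simp [le_max_right]
          · intro x
            have hx := ContinuousMap.le_def.mp (hpos j hj) x
            simp only [ContinuousMap.zero_apply] at hx
            simp only [ContinuousMap.sup_apply, ContinuousMap.sub_apply, cst_apply,
              ContinuousMap.zero_apply]
            exact le_trans (abs_max_shift hx ht0.le) htη
        have h1 := hc1 (k+1) (by omega)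
        have h2 := hc1 k (by omega)
        set X := V (c (k+1)); set X' := V ((c (k+1) - cst t) ⊔ 0)
        set Y := V (c k); set Y' := V ((c k - cst t) ⊔ 0)
        have t1 : |X - Y| - |X' - Y'| ≤ |(X - Y) - (X' - Y')| := abs_sub_abs_le_abs_sub _ _
        have t2 : |(X - Y) - (X' - Y')| = |(X - X') + (Y' - Y)| := by ring_nf
        have t3 : |(X - X') + (Y' - Y)| ≤ |X - X'| + |Y' - Y| := abs_add_le _ _
        have t4 : |Y' - Y| = |Y - Y'| := abs_sub_comm _ _
        linarith
      have hsum : (∑ k ∈ Finset.range m, |V (c (k+1)) - V (c k)|) - (m:ℝ) * (2*e) ≤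
          ∑ k ∈ Finset.range m, |V ((c (k+1) - cst t) ⊔ 0) - V ((c k - cst t) ⊔ 0)| := by
        have := Finset.sum_le_sum hterm
        rw [Finset.sum_sub_distrib, Finset.sum_const, Finset.card_range] at this
        simpa [nsmul_eq_mul] using this
      have hme : (m:ℝ) * (2*e) ≤ ε/2 := by
        have h4 : e * (4*((m:ℝ)+1)) = ε := by
          rw [hedef]; field_simp
        nlinarith [he.le, (Nat.cast_nonneg m : (0:ℝ) ≤ (m:ℝ))]
      have hconcat := chainSums_concat V hmem hS'
      refine ⟨β/2 + t, by linarith, by linarith, _, hconcat, ?_⟩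
      push_cast
      nlinarith [hNS']
  -- contradiction
  obtain ⟨M, hM⟩ := hbv 0 f le_rfl hf
  obtain ⟨N, hN⟩ := exists_nat_gt ((M + 1) / (ε/2))
  obtain ⟨t, ht0, ht1, S, hS, hNS⟩ := key N 1 one_pos le_rfl
  obtain ⟨S', hS', hSS'⟩ := chainSums_prepend V le_rfl (lo_nonneg f t) hS
  have hSM : S' ≤ M := hM hS'
  have : (M + 1) < (N : ℝ) * (ε/2) := (div_lt_iff₀ (by positivity)).mp hN
  linarith


end Aux

/-- If a valuation `V` on `C(S^{n-1})₊` is continuous, uniformly continuous on bounded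
sets, and of bounded variation, then its variation function `|V|(f) = |V|([0,f])`
is continuous with respect to the supremum norm. -/
theorem stmt11 (V : C(Metric.sphere (0 : EuclideanSpace ℝ (Fin n)) 1, ℝ) → ℝ)
    (hval : ∀ f g, 0 ≤ f → 0 ≤ g → V (f ⊔ g) + V (f ⊓ g) = V f + V g)
    (hcont : ∀ f, 0 ≤ f → ∀ ε > (0:ℝ), ∃ δ > (0:ℝ), ∀ g, 0 ≤ g →
      (∀ t, |f t - g t| ≤ δ) → |V f - V g| ≤ ε)
    (hucb : ∀ lam > (0:ℝ), ∀ ε > (0:ℝ), ∃ δ > (0:ℝ),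
      ∀ f g : C(Metric.sphere (0 : EuclideanSpace ℝ (Fin n)) 1, ℝ), 0 ≤ f → 0 ≤ g →
      (∀ t, f t ≤ lam) → (∀ t, g t ≤ lam) → (∀ t, |f t - g t| ≤ δ) → |V f - V g| ≤ ε)
    (hbv : ∀ f g, 0 ≤ f → f ≤ g → BddAbove (chainSums V f g)) :
    ∀ f, 0 ≤ f → ∀ ε > (0:ℝ), ∃ δ > (0:ℝ), ∀ h, 0 ≤ h →
      (∀ t, |f t - h t| ≤ δ) → |variation V 0 f - variation V 0 h| ≤ ε := by
  intro f hf ε hε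
  obtain ⟨δ1, hδ1, hδ11, hB1⟩ := Aux.B1 V hcont hbv hf (show (0:ℝ) < ε/4 by positivity)
  obtain ⟨δ2, hδ2, hδ21, hB2⟩ := Aux.B2 V hcont hbv hf (show (0:ℝ) < ε/4 by positivity)
  refine ⟨min δ1 δ2, lt_min hδ1 hδ2, fun h hh hclose => ?_⟩
  have hclose1 : ∀ x, |f x - h x| ≤ δ1 := fun x => (hclose x).trans (min_le_left _ _)
  have hclose2 : ∀ x, |f x - h x| ≤ δ2 := fun x => (hclose x).trans (min_le_right _ _)
  have hfd1 : f ≤ f + Aux.cst δ1 := by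
    rw [ContinuousMap.le_def]; intro x
    simp only [ContinuousMap.add_apply, Aux.cst_apply]; linarith
  have hhd1 : h ≤ f + Aux.cst δ1 := by
    rw [ContinuousMap.le_def]; intro x
    have := abs_le.mp (hclose1 x)
    simp only [ContinuousMap.add_apply, Aux.cst_apply]
    linarith [this.1]
  have hloh : Aux.lo f δ2 ≤ h := by
    rw [ContinuousMap.le_def]; intro x
    have h1 := abs_le.mp (hclose2 x)
    have h2 := ContinuousMap.le_def.mp hh x
    simp only [ContinuousMap.zero_apply] at h2
    simp only [Aux.lo_apply]
    exact max_le (by linarith [h1.2]) h2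
  have bddf := hbv 0 f le_rfl hf
  have bddh := hbv 0 h le_rfl hh
  have varf_nonneg : 0 ≤ variation V 0 f := by
    obtain ⟨S, hS⟩ := Aux.chainSums_nonempty V le_rfl hf
    exact le_trans (Aux.chainSums_nonneg V hS) (le_csSup bddf hS)
  have varh_nonneg : 0 ≤ variation V 0 h := by
    obtain ⟨S, hS⟩ := Aux.chainSums_nonempty V le_rfl hh
    exact le_trans (Aux.chainSums_nonneg V hS) (le_csSup bddh hS)
  have hval' : ∀ a b : EE n, 0 ≤ a → 0 ≤ b → V (a ⊔ b) + V (a ⊓ b) = V a + V b := hval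
  -- upper bound 1 : variation V 0 h ≤ variation V 0 f + ε/4
  have up1 : variation V 0 h ≤ variation V 0 f + ε/4 := by
    refine Real.sSup_le (fun S hS => ?_) (by linarith)
    obtain ⟨S1, hS1, S2, hS2, hle⟩ := Aux.chainSums_split V hf hval' hS
    rw [inf_eq_left.mpr hf] at hS1
    rw [sup_eq_right.mpr hf] at hS2
    obtain ⟨S1', hS1', h11⟩ := Aux.chainSums_append V inf_le_right hS1
    have hS1f : S1 ≤ variation V 0 f := h11.trans (le_csSup bddf hS1')
    obtain ⟨S2', hS2', h22⟩ := Aux.chainSums_append V (sup_le hhd1 hfd1) hS2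
    have hS2f : S2 ≤ ε/4 := h22.trans (hB1 S2' hS2')
    linarith
  -- upper bound 2 : variation V 0 f ≤ variation V 0 h + ε/2
  have up2 : variation V 0 f ≤ variation V 0 h + ε/2 := by
    refine Real.sSup_le (fun S hS => ?_) (by linarith)
    obtain ⟨S1, hS1, S2, hS2, hle⟩ := Aux.chainSums_split V hh hval' hS
    rw [inf_eq_left.mpr hh] at hS1
    rw [sup_eq_right.mpr hh] at hS2
    obtain ⟨S1', hS1', h11⟩ := Aux.chainSums_append V inf_le_right hS1
    have hS1f : S1 ≤ variation V 0 h := h11.trans (le_csSup bddh hS1')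
    -- S2 ∈ chainSums V h (f ⊔ h); prepend lo f δ2
    obtain ⟨S2', hS2', h22⟩ := Aux.chainSums_prepend V (Aux.lo_nonneg f δ2) hloh hS2
    -- split S2' at f
    obtain ⟨S3, hS3, S4, hS4, hle2⟩ := Aux.chainSums_split V hf hval' hS2'
    rw [inf_eq_left.mpr (Aux.lo_le f hf hδ2.le), inf_eq_right.mpr le_sup_left] at hS3
    rw [sup_eq_right.mpr (Aux.lo_le f hf hδ2.le), sup_eq_left.mpr le_sup_left] at hS4
    have hS3f : S3 ≤ ε/4 := hB2 S3 hS3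
    obtain ⟨S4', hS4', h44⟩ := Aux.chainSums_append V (sup_le hfd1 hhd1) hS4
    have hS4f : S4 ≤ ε/4 := h44.trans (hB1 S4' hS4')
    linarith
  rw [abs_le]
  constructor <;> linarith
end

section
/- Let Ṽ : B(S^{n-1})₊ → ℝ be a valuation that is continuous and bounded on bounded sets, and suppose Ṽ(f) = ∫ Φ(f) dμ for a continuous map Φ : B(S^{n-1})₊ → L¹(μ) satisfying Φ(f·χ_A) = Φ(f)·χ_A, where μ is a finite Borel measure controlling Ṽ. If (f_n), (g_n) are sequences in the unit ball of B(S^{n-1})₊ with ‖f_n − g_n‖_∞ → 0, then Φ(f_n)(t) − Φ(g_n)(t) → 0 for μ-almost every t ∈ S^{n-1}. -/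
open MeasureTheory Filter Topology
open scoped ENNReal

section Aux

variable {α : Type*}

private noncomputable def vv (s : ℝ) (h f : ℕ → α → ℝ) (k : ℕ) (t : α) : ℝ≥0∞ :=
  if s ≤ h k t then ENNReal.ofReal (f k t) else 0

private noncomputable def ee (s : ℝ) (h f : ℕ → α → ℝ) (t : α) : ℝ≥0∞ :=
  Filter.limsup (fun k => vv s h f k t) Filter.atTop

private lemma vv_le_one {s : ℝ} {h f : ℕ → α → ℝ} (hf1 : ∀ k t, f k t ≤ 1) (k : ℕ) (t : α) :
    vv s h f k t ≤ 1 := by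
  unfold vv; split
  · exact ENNReal.ofReal_le_one.2 (hf1 k t)
  · exact zero_le

private lemma ee_le_one {s : ℝ} {h f : ℕ → α → ℝ} (hf1 : ∀ k t, f k t ≤ 1) (t : α) :
    ee s h f t ≤ 1 :=
  limsup_le_of_le (by isBoundedDefault) (Eventually.of_forall fun k => vv_le_one hf1 k t)

private lemma ee_ne_top {s : ℝ} {h f : ℕ → α → ℝ} (hf1 : ∀ k t, f k t ≤ 1) (t : α) :
    ee s h f t ≠ ⊤ :=
  (lt_of_le_of_lt (ee_le_one hf1 t) ENNReal.one_lt_top).ne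

private lemma measurable_vv [MeasurableSpace α] {s : ℝ} {h f : ℕ → α → ℝ}
    (hh : ∀ k, Measurable (h k)) (hfm : ∀ k, Measurable (f k)) (k : ℕ) :
    Measurable (vv s h f k) :=
  Measurable.ite (measurableSet_le measurable_const (hh k))
    (ENNReal.measurable_ofReal.comp (hfm k)) measurable_const

private lemma measurable_ee [MeasurableSpace α] {s : ℝ} {h f : ℕ → α → ℝ}
    (hh : ∀ k, Measurable (h k)) (hfm : ∀ k, Measurable (f k)) :
    Measurable (ee s h f) := by
  have hrw : ee s h f = fun t => ⨅ N : ℕ, ⨆ i : ℕ, vv s h f (i + N) t := by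
    funext t; exact limsup_eq_iInf_iSup_of_nat'
  rw [hrw]
  exact Measurable.iInf fun N => Measurable.iSup fun i => measurable_vv hh hfm _

private lemma exists_sel {s : ℝ} {h f : ℕ → α → ℝ} (hf1 : ∀ k t, f k t ≤ 1)
    {t : α} (hio : ∀ N : ℕ, ∃ k, N ≤ k ∧ s ≤ h k t) (N : ℕ) {d : ℝ≥0∞} (hd0 : d ≠ 0)
    (hdt : d ≠ ⊤) :
    ∃ k, N ≤ k ∧ s ≤ h k t ∧ ee s h f t < vv s h f k t + d ∧ vv s h f k t < ee s h f t + d := by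
  have hetop : ee s h f t ≠ ⊤ := ee_ne_top hf1 t
  have hexp : ee s h f t = limsup (fun k => vv s h f k t) atTop := rfl
  have hub : ∀ᶠ k in atTop, vv s h f k t < ee s h f t + d :=
    eventually_lt_of_limsup_lt (by rw [← hexp]; exact ENNReal.lt_add_right hetop hd0)
      (by isBoundedDefault)
  obtain ⟨K₀, hK₀⟩ := eventually_atTop.1 hub
  rcases lt_or_ge (ee s h f t) d with hcase | hcase
  · obtain ⟨k, hk1, hk2⟩ := hio (max N K₀)
    exact ⟨k, le_trans (le_max_left _ _) hk1, hk2, lt_of_lt_of_le hcase le_add_self,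
      hK₀ k (le_trans (le_max_right _ _) hk1)⟩
  · have he0 : ee s h f t ≠ 0 := by
      intro h0; rw [h0] at hcase
      exact hd0 (le_antisymm hcase zero_le)
    have hblt : ee s h f t - d < limsup (fun k => vv s h f k t) atTop := by
      rw [← hexp]; exact ENNReal.sub_lt_self hetop he0 hd0
    have hfreq : ∃ᶠ k in atTop, ee s h f t - d < vv s h f k t :=
      frequently_lt_of_lt_limsup (by isBoundedDefault) hblt
    obtain ⟨k, hk1, hk2⟩ := (frequently_atTop.1 hfreq) (max N K₀)
    have hgap : s ≤ h k t := by
      by_contra hno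
      have hz : vv s h f k t = 0 := if_neg hno
      rw [hz] at hk2
      simp at hk2
    refine ⟨k, le_trans (le_max_left _ _) hk1, hgap, ?_, hK₀ k (le_trans (le_max_right _ _) hk1)⟩
    calc ee s h f t = (ee s h f t - d) + d := (tsub_add_cancel_of_le hcase).symm
      _ < vv s h f k t + d := ENNReal.add_lt_add_right hdt hk2

private lemma sel_close {s : ℝ} {h f : ℕ → α → ℝ} (hf0 : ∀ k t, 0 ≤ f k t)
    (hf1 : ∀ k t, f k t ≤ 1) {t : α} {k : ℕ} (hgap : s ≤ h k t) {d : ℝ≥0∞} (hd0 : d ≠ 0)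
    (hdt : d ≠ ⊤)
    (hlow : ee s h f t < vv s h f k t + d) (hup : vv s h f k t < ee s h f t + d) :
    |f k t - (ee s h f t).toReal| ≤ d.toReal := by
  have hvv : vv s h f k t = ENNReal.ofReal (f k t) := if_pos hgap
  have hetop : ee s h f t ≠ ⊤ := ee_ne_top hf1 t
  have hvtop : vv s h f k t ≠ ⊤ := by rw [hvv]; exact ENNReal.ofReal_ne_top
  have h1 : f k t < (ee s h f t).toReal + d.toReal := by
    have h' := (ENNReal.toReal_lt_toReal hvtop (ENNReal.add_ne_top.2 ⟨hetop, hdt⟩)).2 hup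
    rwa [hvv, ENNReal.toReal_ofReal (hf0 k t), ENNReal.toReal_add hetop hdt] at h'
  have h2 : (ee s h f t).toReal < f k t + d.toReal := by
    have h' := (ENNReal.toReal_lt_toReal hetop (ENNReal.add_ne_top.2 ⟨hvtop, hdt⟩)).2 hlow
    rwa [hvv, ENNReal.toReal_add (hvv ▸ ENNReal.ofReal_ne_top) hdt,
      ENNReal.toReal_ofReal (hf0 k t)] at h'
  rw [abs_sub_le_iff]
  constructor <;> linarith

end Aux

private abbrev Sph (n : ℕ) := Metric.sphere (0 : EuclideanSpace ℝ (Fin n)) 1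


private lemma meas_select {n : ℕ} {f : ℕ → Sph n → ℝ} (hf : ∀ k, Measurable (f k))
    {K : Sph n → ℕ} (hK : ∀ k, MeasurableSet {t | K t = k}) :
    Measurable fun t => f (K t) t := by
  intro B hB
  have hrw : (fun t => f (K t) t) ⁻¹' B = ⋃ k, ({t | K t = k} ∩ f k ⁻¹' B) := by
    ext t
    simp only [Set.mem_preimage, Set.mem_iUnion, Set.mem_inter_iff, Set.mem_setOf_eq]
    constructor
    · intro hmem; exact ⟨K t, rfl, hmem⟩
    · rintro ⟨k, hk, hmem⟩; rwa [hk]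
  rw [hrw]
  exact MeasurableSet.iUnion fun k => (hK k).inter (hf k hB)

private lemma phi_loc {n : ℕ} {μ : Measure (Sph n)}
    {Φ : (Sph n → ℝ) → (Sph n → ℝ)}
    (hΦind : ∀ f, BddBorelNN f → ∀ A, MeasurableSet A →
      Φ (Set.indicator A f) =ᵐ[μ] Set.indicator A (Φ f))
    {x y : Sph n → ℝ} (hx : BddBorelNN x) (hy : BddBorelNN y)
    {A : Set (Sph n)} (hA : MeasurableSet A) (hxy : ∀ t ∈ A, x t = y t) :
    ∀ᵐ t ∂μ, t ∈ A → Φ x t = Φ y t := by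
  have hxyA : Set.indicator A x = Set.indicator A y := Set.indicator_congr hxy
  filter_upwards [hΦind x hx A hA, hΦind y hy A hA] with t h1 h2 ht
  calc Φ x t = Set.indicator A (Φ x) t := (Set.indicator_of_mem ht _).symm
    _ = Φ (Set.indicator A x) t := h1.symm
    _ = Φ (Set.indicator A y) t := by rw [hxyA]
    _ = Set.indicator A (Φ y) t := h2
    _ = Φ y t := Set.indicator_of_mem ht _

private lemma core {n : ℕ} (μ : Measure (Sph n)) [IsFiniteMeasure μ]
    (V : (Sph n → ℝ) → ℝ)
    (hμctrl : ∀ (f : ℕ → Sph n → ℝ) (flim : Sph n → ℝ) (lam : ℝ),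
      (∀ k, BddBorelNN (f k)) → BddBorelNN flim → (∀ k t, f k t ≤ lam) →
      (∀ᵐ t ∂μ, Tendsto (fun k => f k t) atTop (𝓝 (flim t))) →
      Tendsto (fun k => V (f k)) atTop (𝓝 (V flim)))
    (Φ : (Sph n → ℝ) → (Sph n → ℝ))
    (hΦL1 : ∀ f, BddBorelNN f → Integrable (Φ f) μ)
    (hΦrep : ∀ f, BddBorelNN f → V f = ∫ t, Φ f t ∂μ)
    (hΦind : ∀ f, BddBorelNN f → ∀ A, MeasurableSet A →
      Φ (Set.indicator A f) =ᵐ[μ] Set.indicator A (Φ f))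
    (f g : ℕ → Sph n → ℝ)
    (hf : ∀ k, BddBorelNN (f k)) (hg : ∀ k, BddBorelNN (g k))
    (hf1 : ∀ k t, f k t ≤ 1) (hg1 : ∀ k t, g k t ≤ 1)
    (hconv : ∀ ε > (0:ℝ), ∃ N : ℕ, ∀ k ≥ N, ∀ t, |f k t - g k t| ≤ ε)
    (h : ℕ → Sph n → ℝ) (hh : ∀ k, Measurable (h k))
    (hrep : ∀ k, (fun t => Φ (f k) t - Φ (g k) t) =ᵐ[μ] h k)
    (s : ℝ) (hs : 0 < s)
    (F : Set (Sph n)) (hF : MeasurableSet F) (hF0 : μ F ≠ 0)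
    (hFio : ∀ t ∈ F, ∀ N : ℕ, ∃ k, N ≤ k ∧ s ≤ h k t) : False := by
  classical
  have hfm : ∀ k, Measurable (f k) := fun k => (hf k).1
  have hgm : ∀ k, Measurable (g k) := fun k => (hg k).1
  have hf0 : ∀ k t, 0 ≤ f k t := fun k t => (hf k).2.2 t
  have hg0 : ∀ k t, 0 ≤ g k t := fun k t => (hg k).2.2 t
  -- the tolerance sequence
  set dd : ℕ → ℝ≥0∞ := fun N => ENNReal.ofReal (1 / ((N : ℝ) + 1)) with hdd_def
  have hd0 : ∀ N, dd N ≠ 0 := fun N => by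
    simp only [hdd_def, ne_eq, ENNReal.ofReal_eq_zero, not_le]
    positivity
  have hdt : ∀ N, dd N ≠ ⊤ := fun N => ENNReal.ofReal_ne_top
  have hδ : ∀ N, (dd N).toReal = 1 / ((N : ℝ) + 1) := fun N =>
    ENNReal.toReal_ofReal (by positivity)
  -- the selector
  set P : ℕ → Sph n → ℕ → Prop := fun N t k =>
    t ∈ F → (N ≤ k ∧ s ≤ h k t ∧ ee s h f t < vv s h f k t + dd N ∧
      vv s h f k t < ee s h f t + dd N) with hP_def
  have hex : ∀ N t, ∃ k, P N t k := by
    intro N t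
    by_cases ht : t ∈ F
    · obtain ⟨k, h1, h2, h3, h4⟩ := exists_sel hf1 (hFio t ht) N (hd0 N) (hdt N)
      exact ⟨k, fun _ => ⟨h1, h2, h3, h4⟩⟩
    · exact ⟨0, fun hc => absurd hc ht⟩
  have hPm : ∀ N k, MeasurableSet {t | P N t k} := by
    intro N k
    have hset : {t | P N t k} = Fᶜ ∪ {t | N ≤ k ∧ s ≤ h k t ∧
        ee s h f t < vv s h f k t + dd N ∧ vv s h f k t < ee s h f t + dd N} := by
      ext t
      simp only [hP_def, Set.mem_setOf_eq, Set.mem_union, Set.mem_compl_iff]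
      tauto
    rw [hset]
    by_cases hNk : N ≤ k
    · refine hF.compl.union ?_
      have hset2 : {t | N ≤ k ∧ s ≤ h k t ∧ ee s h f t < vv s h f k t + dd N ∧
          vv s h f k t < ee s h f t + dd N} = {t | s ≤ h k t} ∩
          ({t | ee s h f t < vv s h f k t + dd N} ∩ {t | vv s h f k t < ee s h f t + dd N}) := by
        ext t; simp only [Set.mem_setOf_eq, Set.mem_inter_iff, hNk, true_and]; try tauto
      rw [hset2]
      exact (measurableSet_le measurable_const (hh k)).inter
        ((measurableSet_lt (measurable_ee hh hfm) ((measurable_vv hh hfm k).add measurable_const)).inter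
          (measurableSet_lt (measurable_vv hh hfm k) ((measurable_ee hh hfm).add measurable_const)))
    · have hset2 : {t | N ≤ k ∧ s ≤ h k t ∧ ee s h f t < vv s h f k t + dd N ∧
          vv s h f k t < ee s h f t + dd N} = (∅ : Set (Sph n)) := by
        ext t; simp [hNk]
      rw [hset2, Set.union_empty]
      exact hF.compl
  set K : ℕ → Sph n → ℕ := fun N t => Nat.find (hex N t) with hK_def
  have hKspec : ∀ N t, P N t (K N t) := fun N t => Nat.find_spec (hex N t)
  have hKm : ∀ N, Measurable (K N) := fun N => measurable_find _ (hPm N)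
  -- pasted sequences
  set u : ℕ → Sph n → ℝ := fun N => F.indicator (fun t => f (K N t) t) with hu_def
  set w : ℕ → Sph n → ℝ := fun N => F.indicator (fun t => g (K N t) t) with hw_def
  set L : Sph n → ℝ := F.indicator (fun t => (ee s h f t).toReal) with hL_def
  have huF : ∀ N t, t ∈ F → u N t = f (K N t) t := fun N t ht => Set.indicator_of_mem ht _
  have huN : ∀ N t, t ∉ F → u N t = 0 := fun N t ht => Set.indicator_of_notMem ht _
  have hwF : ∀ N t, t ∈ F → w N t = g (K N t) t := fun N t ht => Set.indicator_of_mem ht _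
  have hwN : ∀ N t, t ∉ F → w N t = 0 := fun N t ht => Set.indicator_of_notMem ht _
  have hLF : ∀ t, t ∈ F → L t = (ee s h f t).toReal := fun t ht => Set.indicator_of_mem ht _
  have hLN : ∀ t, t ∉ F → L t = 0 := fun t ht => Set.indicator_of_notMem ht _
  have huBB : ∀ N, BddBorelNN (u N) := by
    intro N
    refine ⟨(meas_select hfm (fun k => (hKm N) (measurableSet_singleton k))).indicator hF,
      ⟨1, fun t => ?_⟩, fun t => Set.indicator_apply_nonneg fun _ => hf0 _ t⟩
    by_cases ht : t ∈ F
    · rw [huF N t ht]; exact hf1 _ t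
    · rw [huN N t ht]; exact zero_le_one
  have hwBB : ∀ N, BddBorelNN (w N) := by
    intro N
    refine ⟨(meas_select hgm (fun k => (hKm N) (measurableSet_singleton k))).indicator hF,
      ⟨1, fun t => ?_⟩, fun t => Set.indicator_apply_nonneg fun _ => hg0 _ t⟩
    by_cases ht : t ∈ F
    · rw [hwF N t ht]; exact hg1 _ t
    · rw [hwN N t ht]; exact zero_le_one
  have hu1 : ∀ N t, u N t ≤ 1 := by
    intro N t
    by_cases ht : t ∈ F
    · rw [huF N t ht]; exact hf1 _ t
    · rw [huN N t ht]; exact zero_le_one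
  have hw1 : ∀ N t, w N t ≤ 1 := by
    intro N t
    by_cases ht : t ∈ F
    · rw [hwF N t ht]; exact hg1 _ t
    · rw [hwN N t ht]; exact zero_le_one
  have hLBB : BddBorelNN L := by
    refine ⟨(ENNReal.measurable_toReal.comp (measurable_ee hh hfm)).indicator hF,
      ⟨1, fun t => ?_⟩, fun t => Set.indicator_apply_nonneg fun _ => ENNReal.toReal_nonneg⟩
    by_cases ht : t ∈ F
    · rw [hLF t ht]
      have := ENNReal.toReal_mono ENNReal.one_ne_top (ee_le_one (s := s) (h := h) hf1 t)
      simpa using this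
    · rw [hLN t ht]; exact zero_le_one
  -- closeness on F
  have hu_close : ∀ N t, t ∈ F → |f (K N t) t - (ee s h f t).toReal| ≤ 1 / ((N : ℝ) + 1) := by
    intro N t ht
    obtain ⟨h1, h2, h3, h4⟩ := hKspec N t ht
    have := sel_close hf0 hf1 h2 (hd0 N) (hdt N) h3 h4
    rwa [hδ N] at this
  -- pointwise convergence
  have tendsto_u : ∀ t, Tendsto (fun N => u N t) atTop (𝓝 (L t)) := by
    intro t
    rw [Metric.tendsto_atTop]
    intro ε hε
    obtain ⟨m, hm⟩ := exists_nat_one_div_lt (K := ℝ) hε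
    refine ⟨m, fun N hN => ?_⟩
    by_cases ht : t ∈ F
    · rw [Real.dist_eq, huF N t ht, hLF t ht]
      have h1 := hu_close N t ht
      have hmono : 1 / ((N : ℝ) + 1) ≤ 1 / ((m : ℝ) + 1) := by
        apply one_div_le_one_div_of_le
        · positivity
        · have : (m : ℝ) ≤ (N : ℝ) := Nat.cast_le.2 hN
          linarith
      linarith
    · rw [Real.dist_eq, huN N t ht, hLN t ht]
      simpa using hε
  have tendsto_w : ∀ t, Tendsto (fun N => w N t) atTop (𝓝 (L t)) := by
    intro t
    rw [Metric.tendsto_atTop]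
    intro ε hε
    obtain ⟨N₁, hN₁⟩ := hconv (ε / 2) (half_pos hε)
    obtain ⟨m, hm⟩ := exists_nat_one_div_lt (K := ℝ) (half_pos hε)
    refine ⟨max N₁ m, fun N hN => ?_⟩
    by_cases ht : t ∈ F
    · have hk := hKspec N t ht
      have hkge : N₁ ≤ K N t := le_trans (le_trans (le_max_left _ _) hN) hk.1
      have h1 : |f (K N t) t - g (K N t) t| ≤ ε / 2 := hN₁ _ hkge t
      have h2 := hu_close N t ht
      have hmle : m ≤ N := le_trans (le_max_right _ _) hN
      have hmono : 1 / ((N : ℝ) + 1) ≤ 1 / ((m : ℝ) + 1) := by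
        apply one_div_le_one_div_of_le
        · positivity
        · have : (m : ℝ) ≤ (N : ℝ) := Nat.cast_le.2 hmle
          linarith
      rw [Real.dist_eq, hwF N t ht, hLF t ht]
      have htri : |g (K N t) t - (ee s h f t).toReal| ≤
          |g (K N t) t - f (K N t) t| + |f (K N t) t - (ee s h f t).toReal| :=
        abs_sub_le _ _ _
      rw [abs_sub_comm] at h1
      linarith
    · rw [Real.dist_eq, hwN N t ht, hLN t ht]
      simpa using hε
  -- the V-gap
  have hgap : ∀ N, s * (μ F).toReal ≤ V (u N) - V (w N) := by
    intro N
    have hUBB := huBB N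
    have hWBB := hwBB N
    rw [hΦrep _ hUBB, hΦrep _ hWBB, ← integral_sub (hΦL1 _ hUBB) (hΦL1 _ hWBB)]
    have hind : Integrable (F.indicator (fun _ => s)) μ := (integrable_const s).indicator hF
    have hAk : ∀ k : ℕ, ∀ᵐ t ∂μ, t ∈ (F ∩ {t | K N t = k}) → Φ (u N) t = Φ (f k) t := by
      intro k
      apply phi_loc hΦind hUBB (hf k) (hF.inter ((hKm N) (measurableSet_singleton k)))
      rintro t ⟨ht1, ht2⟩
      have ht2' : K N t = k := ht2
      rw [huF N t ht1, ht2']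
    have hBk : ∀ k : ℕ, ∀ᵐ t ∂μ, t ∈ (F ∩ {t | K N t = k}) → Φ (w N) t = Φ (g k) t := by
      intro k
      apply phi_loc hΦind hWBB (hg k) (hF.inter ((hKm N) (measurableSet_singleton k)))
      rintro t ⟨ht1, ht2⟩
      have ht2' : K N t = k := ht2
      rw [hwF N t ht1, ht2']
    have hC : ∀ᵐ t ∂μ, t ∈ Fᶜ → Φ (u N) t = Φ (w N) t := by
      apply phi_loc hΦind hUBB hWBB hF.compl
      intro t ht
      rw [huN N t ht, hwN N t ht]
    have hrep' : ∀ᵐ t ∂μ, ∀ k, Φ (f k) t - Φ (g k) t = h k t := ae_all_iff.2 fun k => hrep k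
    have hkey : ∀ᵐ t ∂μ, F.indicator (fun _ : Sph n => s) t ≤ Φ (u N) t - Φ (w N) t := by
      filter_upwards [ae_all_iff.2 hAk, ae_all_iff.2 hBk, hC, hrep'] with t H1 H2 H3 H4
      by_cases ht : t ∈ F
      · rw [Set.indicator_of_mem ht]
        have e1 := H1 (K N t) ⟨ht, rfl⟩
        have e2 := H2 (K N t) ⟨ht, rfl⟩
        rw [e1, e2, H4 (K N t)]
        exact (hKspec N t ht).2.1
      · rw [Set.indicator_of_notMem ht, H3 ht]
        simp
    calc s * (μ F).toReal = ∫ t, F.indicator (fun _ => s) t ∂μ := by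
          rw [integral_indicator_const s hF, smul_eq_mul, mul_comm]; rfl
      _ ≤ ∫ t, (Φ (u N) t - Φ (w N) t) ∂μ :=
          integral_mono_ae hind ((hΦL1 _ hUBB).sub (hΦL1 _ hWBB)) hkey
  -- contradiction
  have hμu : Tendsto (fun N => V (u N)) atTop (𝓝 (V L)) :=
    hμctrl u L 1 huBB hLBB hu1 (ae_of_all _ tendsto_u)
  have hμw : Tendsto (fun N => V (w N)) atTop (𝓝 (V L)) :=
    hμctrl w L 1 hwBB hLBB hw1 (ae_of_all _ tendsto_w)
  have hlim : Tendsto (fun N => V (u N) - V (w N)) atTop (𝓝 0) := by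
    simpa using hμu.sub hμw
  have hle : s * (μ F).toReal ≤ 0 := ge_of_tendsto' hlim hgap
  have hpos : 0 < s * (μ F).toReal :=
    mul_pos hs (ENNReal.toReal_pos hF0 (measure_ne_top μ F))
  linarith

/-- If `Ṽ(f) = ∫ Φ(f) dμ` with `Φ` orthogonally additive and continuous, `Ṽ` a continuous
valuation bounded on bounded sets with `μ` controlling `Ṽ`, then for sequences `(fₙ), (gₙ)`
in the unit ball of `B(S^{n-1})₊` with `‖fₙ − gₙ‖_∞ → 0` we have
`Φ(fₙ)(t) − Φ(gₙ)(t) → 0` for μ-almost every `t`. -/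
theorem stmt15 {n : ℕ} (μ : Measure (Metric.sphere (0 : EuclideanSpace ℝ (Fin n)) 1))
    [IsFiniteMeasure μ]
    (V : (Metric.sphere (0 : EuclideanSpace ℝ (Fin n)) 1 → ℝ) → ℝ)
    (hval : ∀ f g, BddBorelNN f → BddBorelNN g →
      V (fun t => max (f t) (g t)) + V (fun t => min (f t) (g t)) = V f + V g)
    (hcont : ∀ f, BddBorelNN f → ∀ ε > (0:ℝ), ∃ δ > (0:ℝ), ∀ g, BddBorelNN g →
      (∀ t, |f t - g t| ≤ δ) → |V f - V g| ≤ ε)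
    (hbdd : ∀ lam : ℝ, 0 < lam → ∃ M : ℝ, ∀ f, BddBorelNN f → (∀ t, f t ≤ lam) → |V f| ≤ M)
    (hμctrl : ∀ (f : ℕ → Metric.sphere (0 : EuclideanSpace ℝ (Fin n)) 1 → ℝ)
        (flim : Metric.sphere (0 : EuclideanSpace ℝ (Fin n)) 1 → ℝ) (lam : ℝ),
      (∀ k, BddBorelNN (f k)) → BddBorelNN flim → (∀ k t, f k t ≤ lam) →
      (∀ᵐ t ∂μ, Tendsto (fun k => f k t) atTop (𝓝 (flim t))) →
      Tendsto (fun k => V (f k)) atTop (𝓝 (V flim)))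
    (Φ : (Metric.sphere (0 : EuclideanSpace ℝ (Fin n)) 1 → ℝ) →
      (Metric.sphere (0 : EuclideanSpace ℝ (Fin n)) 1 → ℝ))
    (hΦL1 : ∀ f, BddBorelNN f → Integrable (Φ f) μ)
    (hΦrep : ∀ f, BddBorelNN f → V f = ∫ t, Φ f t ∂μ)
    (hΦind : ∀ f, BddBorelNN f → ∀ A, MeasurableSet A →
      Φ (Set.indicator A f) =ᵐ[μ] Set.indicator A (Φ f))
    (hΦcont : ∀ f, BddBorelNN f → ∀ ε > (0:ℝ), ∃ δ > (0:ℝ), ∀ g, BddBorelNN g →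
      (∀ t, |f t - g t| ≤ δ) → ∫ t, |Φ f t - Φ g t| ∂μ ≤ ε)
    (f g : ℕ → Metric.sphere (0 : EuclideanSpace ℝ (Fin n)) 1 → ℝ)
    (hf : ∀ k, BddBorelNN (f k)) (hg : ∀ k, BddBorelNN (g k))
    (hf1 : ∀ k t, f k t ≤ 1) (hg1 : ∀ k t, g k t ≤ 1)
    (hconv : ∀ ε > (0:ℝ), ∃ N : ℕ, ∀ k ≥ N, ∀ t, |f k t - g k t| ≤ ε) :
    ∀ᵐ t ∂μ, Tendsto (fun k => Φ (f k) t - Φ (g k) t) atTop (𝓝 0) := by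
  classical
  have hφf : ∀ k, AEMeasurable (Φ (f k)) μ := fun k => (hΦL1 _ (hf k)).1.aemeasurable
  have hφg : ∀ k, AEMeasurable (Φ (g k)) μ := fun k => (hΦL1 _ (hg k)).1.aemeasurable
  set h : ℕ → Metric.sphere (0 : EuclideanSpace ℝ (Fin n)) 1 → ℝ :=
    fun k t => (hφf k).mk _ t - (hφg k).mk _ t with hh_def
  have hhm : ∀ k, Measurable (h k) := fun k => ((hφf k).measurable_mk).sub ((hφg k).measurable_mk)
  have hrep : ∀ k, (fun t => Φ (f k) t - Φ (g k) t) =ᵐ[μ] h k := by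
    intro k
    filter_upwards [(hφf k).ae_eq_mk, (hφg k).ae_eq_mk] with t e1 e2
    rw [hh_def]
    dsimp only
    rw [← e1, ← e2]
  have hae : ∀ᵐ t ∂μ, ∀ k, Φ (f k) t - Φ (g k) t = h k t := ae_all_iff.2 fun k => hrep k
  suffices hmain : ∀ᵐ t ∂μ, Tendsto (fun k => h k t) atTop (𝓝 0) by
    filter_upwards [hmain, hae] with t h1 h2
    have hfx : (fun k => Φ (f k) t - Φ (g k) t) = fun k => h k t := funext fun k => h2 k
    rw [hfx]
    exact h1
  by_contra hcon
  rw [ae_iff] at hcon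
  set Bp : (ℕ → Metric.sphere (0 : EuclideanSpace ℝ (Fin n)) 1 → ℝ) → ℝ →
      Set (Metric.sphere (0 : EuclideanSpace ℝ (Fin n)) 1) :=
    fun H s => {t | ∀ N : ℕ, ∃ k, N ≤ k ∧ s ≤ H k t} with hBp_def
  have hBpm : ∀ (H : ℕ → Metric.sphere (0 : EuclideanSpace ℝ (Fin n)) 1 → ℝ),
      (∀ k, Measurable (H k)) → ∀ s : ℝ, MeasurableSet (Bp H s) := by
    intro H hH s
    have hrw : Bp H s = ⋂ N : ℕ, ⋃ k : ℕ, ⋃ (_ : N ≤ k), {t | s ≤ H k t} := by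
      ext t
      simp only [hBp_def, Set.mem_setOf_eq, Set.mem_iInter, Set.mem_iUnion]
      constructor
      · intro ha N; obtain ⟨k, h1, h2⟩ := ha N; exact ⟨k, h1, h2⟩
      · intro ha N; obtain ⟨k, h1, h2⟩ := ha N; exact ⟨k, h1, h2⟩
    rw [hrw]
    exact MeasurableSet.iInter fun N => MeasurableSet.iUnion fun k =>
      MeasurableSet.iUnion fun _ => measurableSet_le measurable_const (hH k)
  have hsub : {t | ¬ Tendsto (fun k => h k t) atTop (𝓝 0)} ⊆
      ⋃ m : ℕ, (Bp h (1 / ((m : ℝ) + 1)) ∪ Bp (fun k t => -(h k t)) (1 / ((m : ℝ) + 1))) := by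
    intro t ht
    simp only [Set.mem_setOf_eq] at ht
    have hio : ∃ ε > (0:ℝ), ∀ N : ℕ, ∃ k, N ≤ k ∧ ε ≤ |h k t| := by
      by_contra hno
      push_neg at hno
      apply ht
      rw [Metric.tendsto_atTop]
      intro ε hε
      obtain ⟨N, hN⟩ := hno (ε / 2) (half_pos hε)
      refine ⟨N, fun k hk => ?_⟩
      have := hN k hk
      rw [Real.dist_eq, sub_zero]
      linarith
    obtain ⟨ε, hε, hio⟩ := hio
    obtain ⟨m, hm⟩ := exists_nat_one_div_lt (K := ℝ) hε
    have hio' : ∀ N : ℕ, ∃ k, N ≤ k ∧ 1 / ((m : ℝ) + 1) ≤ |h k t| := by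
      intro N
      obtain ⟨k, hk1, hk2⟩ := hio N
      exact ⟨k, hk1, le_trans (le_of_lt hm) hk2⟩
    refine Set.mem_iUnion.2 ⟨m, ?_⟩
    by_cases hp : t ∈ Bp h (1 / ((m : ℝ) + 1))
    · exact Set.mem_union_left _ hp
    · refine Set.mem_union_right _ ?_
      simp only [hBp_def, Set.mem_setOf_eq] at hp ⊢
      push_neg at hp
      obtain ⟨N₀, hN₀⟩ := hp
      intro N
      obtain ⟨k, hk1, hk2⟩ := hio' (max N N₀)
      refine ⟨k, le_trans (le_max_left _ _) hk1, ?_⟩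
      have h3 := hN₀ k (le_trans (le_max_right _ _) hk1)
      rcases le_abs.1 hk2 with hcase | hcase
      · linarith
      · linarith
  have hU : μ (⋃ m : ℕ, (Bp h (1 / ((m : ℝ) + 1)) ∪
      Bp (fun k t => -(h k t)) (1 / ((m : ℝ) + 1)))) ≠ 0 :=
    fun h0 => hcon (measure_mono_null hsub h0)
  have hex : ∃ m : ℕ, μ (Bp h (1 / ((m : ℝ) + 1)) ∪
      Bp (fun k t => -(h k t)) (1 / ((m : ℝ) + 1))) ≠ 0 := by
    by_contra hall
    push_neg at hall
    exact hU (measure_iUnion_null fun m => hall m)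
  obtain ⟨m, hm⟩ := hex
  have hspos : (0:ℝ) < 1 / ((m : ℝ) + 1) := by positivity
  have hcases : μ (Bp h (1 / ((m : ℝ) + 1))) ≠ 0 ∨
      μ (Bp (fun k t => -(h k t)) (1 / ((m : ℝ) + 1))) ≠ 0 := by
    by_contra hno
    push_neg at hno
    exact hm (measure_union_null hno.1 hno.2)
  rcases hcases with hcase | hcase
  · exact core μ V hμctrl Φ hΦL1 hΦrep hΦind f g hf hg hf1 hg1 hconv h hhm hrep
      (1 / ((m : ℝ) + 1)) hspos (Bp h (1 / ((m : ℝ) + 1))) (hBpm h hhm _) hcase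
      (fun t ht N => ht N)
  · refine core μ V hμctrl Φ hΦL1 hΦrep hΦind g f hg hf hg1 hf1 ?_
      (fun k t => -(h k t)) (fun k => (hhm k).neg) ?_
      (1 / ((m : ℝ) + 1)) hspos (Bp (fun k t => -(h k t)) (1 / ((m : ℝ) + 1)))
      (hBpm _ (fun k => (hhm k).neg) _) hcase (fun t ht N => ht N)
    · intro ε hε
      obtain ⟨N, hN⟩ := hconv ε hε
      exact ⟨N, fun k hk t => by rw [abs_sub_comm]; exact hN k hk t⟩
    · intro k
      filter_upwards [hrep k] with t ht
      have ht' : Φ (f k) t - Φ (g k) t = h k t := ht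
      show Φ (g k) t - Φ (f k) t = -(h k t)
      rw [← ht']
      ring
end

section
/- Let (f_n) ⊂ L¹(Ω, Σ, μ) with μ(Ω) < ∞ and sup_n ‖f_n‖_{L¹} < ∞. Then there exist a subsequence (f_{n_k}) and a sequence of pairwise disjoint measurable sets (A_k) such that the sequence (f_{n_k}·χ_{A_kᶜ}) is uniformly integrable. -/
open MeasureTheory Filter Topology

section KPaux
variable {Ω : Type*} [MeasurableSpace Ω] {μ : Measure Ω}

lemma KP.dep_choice {α : Type*} (Q : ℕ → α → Prop) (R : ℕ → α → α → Prop)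
    (h0 : ∃ a, Q 0 a) (hs : ∀ k a, Q k a → ∃ b, Q (k + 1) b ∧ R k a b) :
    ∃ g : ℕ → α, (∀ k, Q k (g k)) ∧ ∀ k, R k (g k) (g (k + 1)) := by
  obtain ⟨a0, ha0⟩ := h0
  choose F hF1 hF2 using hs
  let G : (k : ℕ) → {a : α // Q k a} :=
    fun k => Nat.rec ⟨a0, ha0⟩ (fun k p => ⟨F k p.1 p.2, hF1 k p.1 p.2⟩) k
  exact ⟨fun k => (G k).1, fun k => (G k).2, fun k => hF2 k (G k).1 (G k).2⟩

lemma KP.abscont {g : Ω → ℝ} (hg : Integrable g μ) {ε : ℝ} (hε : 0 < ε) :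
    ∃ δ > 0, ∀ s : Set Ω, MeasurableSet s → μ s ≤ ENNReal.ofReal δ →
      ∫ ω in s, |g ω| ∂μ ≤ ε := by
  obtain ⟨δ, hδ, H⟩ :=
    (memLp_one_iff_integrable.2 hg).eLpNorm_indicator_le le_rfl ENNReal.one_ne_top hε
  refine ⟨δ, hδ, fun s hs hμs => ?_⟩
  have h1 : ∫ ω in s, |g ω| ∂μ = (eLpNorm (s.indicator g) 1 μ).toReal := by
    rw [eLpNorm_indicator_eq_eLpNorm_restrict hs, eLpNorm_one_eq_lintegral_enorm]
    rw [← integral_norm_eq_lintegral_enorm hg.aestronglyMeasurable.restrict]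
    simp [Real.norm_eq_abs]
  rw [h1]
  calc (eLpNorm (s.indicator g) 1 μ).toReal ≤ (ENNReal.ofReal ε).toReal :=
        ENNReal.toReal_mono ENNReal.ofReal_ne_top (H s hs hμs)
    _ = ε := ENNReal.toReal_ofReal hε.le

lemma KP.setIntegral_union_le {g : Ω → ℝ} (hg : Integrable g μ) (hg0 : ∀ ω, 0 ≤ g ω)
    {s t : Set Ω} (hs : MeasurableSet s) (ht : MeasurableSet t) :
    ∫ ω in s ∪ t, g ω ∂μ ≤ ∫ ω in s, g ω ∂μ + ∫ ω in t, g ω ∂μ := by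
  have h1 : s ∪ t = s ∪ (t \ s) := by rw [Set.union_diff_self]
  rw [h1, setIntegral_union disjoint_sdiff_self_right (ht.diff hs) hg.integrableOn
    hg.integrableOn]
  refine add_le_add_right (setIntegral_mono_set hg.integrableOn
    (ae_of_all _ hg0) (HasSubset.Subset.eventuallyLE Set.diff_subset)) _
end KPaux

/-- Kadec–Pełczyński subsequence splitting lemma in `L¹` of a finite measure: an
`L¹`-bounded sequence admits a subsequence `(f_{n_k})` and pairwise disjoint measurable
sets `(A_k)` such that `(f_{n_k} χ_{A_kᶜ})` is uniformly integrable. -/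
theorem stmt16 {Ω : Type*} [MeasurableSpace Ω] (μ : Measure Ω) [IsFiniteMeasure μ]
    (f : ℕ → Ω → ℝ) (hint : ∀ k, Integrable (f k) μ)
    (hbd : ∃ C : ℝ, ∀ k, ∫ ω, |f k ω| ∂μ ≤ C) :
    ∃ nk : ℕ → ℕ, StrictMono nk ∧
      ∃ A : ℕ → Set Ω, (∀ k, MeasurableSet (A k)) ∧
        Pairwise (Function.onFun Disjoint A) ∧
        ∀ ε > (0:ℝ), ∃ δ > (0:ℝ), ∀ B : Set Ω, MeasurableSet B →
          μ B < ENNReal.ofReal δ →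
          ∀ k, ∫ ω in B, |Set.indicator (A k)ᶜ (f (nk k)) ω| ∂μ < ε := by
  classical
  obtain ⟨C, hC⟩ := hbd
  -- measurable versions of the functions
  set f' : ℕ → Ω → ℝ := fun n => (hint n).1.mk (f n) with hf'def
  have hmeas : ∀ n, StronglyMeasurable (f' n) := fun n => (hint n).1.stronglyMeasurable_mk
  have hae : ∀ n, f n =ᵐ[μ] f' n := fun n => (hint n).1.ae_eq_mk
  have hint' : ∀ n, Integrable (f' n) μ := fun n => (hint n).congr (hae n)
  have habs : ∀ n, Integrable (fun ω => |f' n ω|) μ := fun n => (hint' n).abs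
  have hCn : ∀ n, ∫ ω, |f' n ω| ∂μ ≤ C := by
    intro n
    calc ∫ ω, |f' n ω| ∂μ = ∫ ω, |f n ω| ∂μ :=
          integral_congr_ae ((hae n).mono fun ω h => by simp [h])
      _ ≤ C := hC n
  -- truncation sets and tail integrals
  set T : ℕ → ℕ → Set Ω := fun n j => {ω | (j : ℝ) ≤ |f' n ω|} with hTdef
  have hT : ∀ n j, MeasurableSet (T n j) :=
    fun n j => measurableSet_le measurable_const (hmeas n).measurable.abs
  set a : ℕ → ℕ → ℝ := fun n j => ∫ ω in T n j, |f' n ω| ∂μ with hadef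
  have ha0 : ∀ n j, 0 ≤ a n j := fun n j =>
    setIntegral_nonneg (hT n j) fun ω _ => abs_nonneg _
  have haC : ∀ n j, a n j ≤ C := fun n j =>
    (setIntegral_le_integral (habs n) (ae_of_all _ fun ω => abs_nonneg _)).trans (hCn n)
  have haanti : ∀ n {i j : ℕ}, i ≤ j → a n j ≤ a n i := by
    intro n i j hij
    refine setIntegral_mono_set (habs n).integrableOn (ae_of_all _ fun ω => abs_nonneg _)
      (HasSubset.Subset.eventuallyLE fun ω hω => ?_)
    have hω' : (j : ℝ) ≤ |f' n ω| := hω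
    show (i : ℝ) ≤ |f' n ω|
    exact le_trans (by exact_mod_cast hij) hω'
  set S : ℕ → ℝ := fun j => limsup (fun n => a n j) atTop with hSdef
  have hbdd : ∀ j, IsBoundedUnder (· ≤ ·) atTop (fun n => a n j) :=
    fun j => isBoundedUnder_of ⟨C, fun n => haC n j⟩
  have hcobdd : ∀ j, IsCoboundedUnder (· ≤ ·) atTop (fun n => a n j) :=
    fun j => (isBoundedUnder_of ⟨0, fun n => ha0 n j⟩ :
      IsBoundedUnder (· ≥ ·) atTop _).isCoboundedUnder_le
  have hS0 : ∀ j, 0 ≤ S j := fun j =>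
    le_limsup_of_frequently_le (Frequently.of_forall fun n => ha0 n j) (hbdd j)
  have hbdl : BddBelow (Set.range S) := ⟨0, by rintro x ⟨j, rfl⟩; exact hS0 j⟩
  set α : ℝ := ⨅ j, S j with hαdef
  have hαS : ∀ j, α ≤ S j := fun j => ciInf_le hbdl j
  -- Markov inequality
  have hmarkov : ∀ n (L : ℕ), 0 < L → μ (T n L) ≤ ENNReal.ofReal (C / L) := by
    intro n L hL
    have hLR : (0:ℝ) < L := by exact_mod_cast hL
    have h1 : (L : ℝ) * (μ (T n L)).toReal ≤ C := by
      have h2 : ∫ _ω in T n L, (L:ℝ) ∂μ ≤ ∫ ω in T n L, |f' n ω| ∂μ :=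
        setIntegral_mono_on (integrableOn_const (measure_ne_top μ _))
          (habs n).integrableOn (hT n L) fun ω hω => hω
      rw [setIntegral_const, smul_eq_mul, mul_comm] at h2
      exact h2.trans (haC n L)
    have h3 : (μ (T n L)).toReal ≤ C / L := (le_div_iff₀ hLR).2 (by linarith)
    calc μ (T n L) = ENNReal.ofReal (μ (T n L)).toReal :=
          (ENNReal.ofReal_toReal (measure_ne_top μ _)).symm
      _ ≤ ENNReal.ofReal (C / L) := ENNReal.ofReal_le_ofReal h3
  -- selection of good indices
  have select : ∀ (k L N : ℕ), ∃ n, N ≤ n ∧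
      (∀ j ≤ k, a n j ≤ S j + (2:ℝ)⁻¹ ^ k) ∧ α - (2:ℝ)⁻¹ ^ k ≤ a n L := by
    intro k L N
    have hp : (0:ℝ) < (2:ℝ)⁻¹ ^ k := by positivity
    have h1 : ∀ᶠ n in atTop, ∀ j ∈ Finset.range (k + 1), a n j ≤ S j + (2:ℝ)⁻¹ ^ k := by
      rw [eventually_all_finset]
      intro j _
      exact (eventually_lt_of_limsup_lt (lt_add_of_pos_right _ hp) (hbdd j)).mono
        fun n h => h.le
    have h2 : ∃ᶠ n in atTop, α - (2:ℝ)⁻¹ ^ k < a n L :=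
      frequently_lt_of_lt_limsup (hcobdd L) (lt_of_lt_of_le (by linarith) (hαS L))
    obtain ⟨n, hn⟩ := ((h1.and (eventually_ge_atTop N)).and_frequently h2).exists
    exact ⟨n, hn.1.2, fun j hj => hn.1.1 j (Finset.mem_range.2 (Nat.lt_succ_of_le hj)),
      hn.2.le⟩
  -- the invariant for the recursive construction; state = (L, n, δ)
  set Q : ℕ → ℕ × ℕ × ℝ → Prop := fun k s =>
    0 < s.2.2 ∧ k ≤ s.1 ∧
    (∀ j ≤ k, a s.2.1 j ≤ S j + (2:ℝ)⁻¹ ^ k) ∧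
    (α - (2:ℝ)⁻¹ ^ k ≤ a s.2.1 s.1) ∧
    (∀ D : Set Ω, MeasurableSet D → μ D ≤ ENNReal.ofReal s.2.2 →
      ∫ ω in D, |f' s.2.1 ω| ∂μ ≤ (2:ℝ)⁻¹ ^ k) with hQdef
  set R : ℕ → ℕ × ℕ × ℝ → ℕ × ℕ × ℝ → Prop := fun k s t =>
    s.2.1 < t.2.1 ∧ t.2.2 ≤ s.2.2 ∧
    μ (T t.2.1 t.1) ≤ ENNReal.ofReal ((2:ℝ)⁻¹ ^ (k + 1) * s.2.2) with hRdef
  have hQ0 : ∃ s, Q 0 s := by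
    obtain ⟨n0, -, h1, h2⟩ := select 0 0 0
    obtain ⟨δ0, hδ0, hP⟩ := KP.abscont (hint' n0) (show (0:ℝ) < (2:ℝ)⁻¹ ^ 0 by norm_num)
    exact ⟨(0, n0, δ0), hδ0, le_rfl, h1, h2, hP⟩
  have hstep : ∀ k s, Q k s → ∃ t, Q (k + 1) t ∧ R k s t := by
    intro k s hQs
    have hδ : 0 < s.2.2 := hQs.1
    set L' : ℕ := max (k + 1) (⌈C * 2 ^ (k + 1) / s.2.2⌉₊ + 1) with hL'def
    have hL'pos : 0 < L' := lt_of_lt_of_le (Nat.succ_pos k) (le_max_left _ _)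
    have hCL : C / L' ≤ (2:ℝ)⁻¹ ^ (k + 1) * s.2.2 := by
      have hx : C * 2 ^ (k + 1) / s.2.2 ≤ (L' : ℝ) := by
        refine (Nat.le_ceil _).trans ?_
        have h4 : (⌈C * 2 ^ (k + 1) / s.2.2⌉₊ + 1 : ℕ) ≤ L' := le_max_right _ _
        have h5 : ((⌈C * 2 ^ (k + 1) / s.2.2⌉₊ + 1 : ℕ) : ℝ) ≤ (L' : ℝ) := Nat.cast_le.2 h4
        refine le_trans ?_ h5
        push_cast
        linarith
      have hL'R : (0:ℝ) < L' := by exact_mod_cast hL'pos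
      rw [div_le_iff₀ hL'R]
      rw [div_le_iff₀ hδ] at hx
      have h2 : ((2:ℝ)⁻¹) ^ (k + 1) * 2 ^ (k + 1) = 1 := by
        rw [← mul_pow]; norm_num
      have h6 := mul_le_mul_of_nonneg_left hx
        (le_of_lt (pow_pos (show (0:ℝ) < 2⁻¹ by norm_num) (k + 1)))
      calc C = C * ((2:ℝ)⁻¹ ^ (k + 1) * 2 ^ (k + 1)) := by rw [h2, mul_one]
        _ = (2:ℝ)⁻¹ ^ (k + 1) * (C * 2 ^ (k + 1)) := by ring
        _ ≤ (2:ℝ)⁻¹ ^ (k + 1) * ((L' : ℝ) * s.2.2) := h6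
        _ = (2:ℝ)⁻¹ ^ (k + 1) * s.2.2 * (L' : ℝ) := by ring
    obtain ⟨n', hn'N, hn'1, hn'2⟩ := select (k + 1) L' (s.2.1 + 1)
    obtain ⟨δ₁, hδ₁, hP⟩ := KP.abscont (hint' n')
      (show (0:ℝ) < (2:ℝ)⁻¹ ^ (k + 1) by positivity)
    refine ⟨(L', n', min s.2.2 δ₁), ⟨lt_min hδ hδ₁, le_max_left _ _, hn'1, hn'2,
      fun D hD hμD => hP D hD (hμD.trans (ENNReal.ofReal_le_ofReal (min_le_right _ _)))⟩,
      hn'N, min_le_left _ _,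
      (hmarkov n' L' hL'pos).trans (ENNReal.ofReal_le_ofReal hCL)⟩
  obtain ⟨g, hQg, hRg⟩ := KP.dep_choice Q R hQ0 hstep
  set nk : ℕ → ℕ := fun k => (g k).2.1 with hnkdef
  set Ls : ℕ → ℕ := fun k => (g k).1 with hLsdef
  set δs : ℕ → ℝ := fun k => (g k).2.2 with hδsdef
  have hmono : StrictMono nk := strictMono_nat_of_lt_succ fun k => (hRg k).1
  have hδanti : Antitone δs := antitone_nat_of_succ_le fun k => (hRg k).2.1
  have hδpos : ∀ k, 0 < δs k := fun k => (hQg k).1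
  set E : ℕ → Set Ω := fun k => T (nk k) (Ls k) with hEdef
  have hEmeas : ∀ k, MeasurableSet (E k) := fun k => hT _ _
  have hEbd : ∀ k, μ (E (k + 1)) ≤ ENNReal.ofReal ((2:ℝ)⁻¹ ^ (k + 1) * δs k) :=
    fun k => (hRg k).2.2
  set U : ℕ → Set Ω := fun k => ⋃ (j : ℕ) (_ : k < j), E j with hUdef
  have hUmeas : ∀ k, MeasurableSet (U k) :=
    fun k => MeasurableSet.iUnion fun j => MeasurableSet.iUnion fun _ => hEmeas j
  -- measure of the tail union
  have hUμ : ∀ k, μ (U k) ≤ ENNReal.ofReal (δs k) := by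
    intro k
    have hsub : U k ⊆ ⋃ i : ℕ, E (k + 1 + i) := by
      intro x hx
      obtain ⟨j, hj⟩ := Set.mem_iUnion.1 hx
      obtain ⟨hkj, hxj⟩ := Set.mem_iUnion.1 hj
      exact Set.mem_iUnion.2 ⟨j - (k + 1), by rwa [Nat.add_sub_cancel' hkj]⟩
    refine (measure_mono hsub).trans ((measure_iUnion_le _).trans ?_)
    have hterm : ∀ i : ℕ, μ (E (k + 1 + i)) ≤
        ENNReal.ofReal ((2:ℝ)⁻¹ ^ (k + 1) * (2:ℝ)⁻¹ ^ i * δs k) := by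
      intro i
      have h1 : μ (E (k + i + 1)) ≤ ENNReal.ofReal ((2:ℝ)⁻¹ ^ (k + i + 1) * δs (k + i)) :=
        hEbd (k + i)
      have h2 : k + 1 + i = k + i + 1 := by ring
      rw [h2]
      refine h1.trans (ENNReal.ofReal_le_ofReal ?_)
      have h3 : (2:ℝ)⁻¹ ^ (k + i + 1) = (2:ℝ)⁻¹ ^ (k + 1) * (2:ℝ)⁻¹ ^ i := by
        rw [← pow_add]; ring_nf
      rw [h3]
      have : δs (k + i) ≤ δs k := hδanti (Nat.le_add_right k i)
      have hp : (0:ℝ) < (2:ℝ)⁻¹ ^ (k + 1) * (2:ℝ)⁻¹ ^ i := by positivity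
      nlinarith
    refine (ENNReal.tsum_le_tsum hterm).trans ?_
    have hsummable : Summable (fun i : ℕ => (2:ℝ)⁻¹ ^ (k + 1) * (2:ℝ)⁻¹ ^ i * δs k) := by
      simp_rw [mul_comm _ (δs k), ← mul_assoc]
      exact (summable_geometric_of_lt_one (by norm_num) (by norm_num)).mul_left _
    rw [← ENNReal.ofReal_tsum_of_nonneg (fun i => mul_nonneg (by positivity) (hδpos k).le) hsummable]
    refine ENNReal.ofReal_le_ofReal ?_
    have htsum : ∑' i : ℕ, (2:ℝ)⁻¹ ^ (k + 1) * (2:ℝ)⁻¹ ^ i * δs k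
        = (2:ℝ)⁻¹ ^ (k + 1) * δs k * 2 := by
      have := tsum_geometric_of_lt_one (show (0:ℝ) ≤ 2⁻¹ by norm_num) (by norm_num)
      calc ∑' i : ℕ, (2:ℝ)⁻¹ ^ (k + 1) * (2:ℝ)⁻¹ ^ i * δs k
          = ((2:ℝ)⁻¹ ^ (k + 1) * δs k) * ∑' i : ℕ, (2:ℝ)⁻¹ ^ i := by
            rw [← tsum_mul_left]; congr 1; ext i; ring
        _ = (2:ℝ)⁻¹ ^ (k + 1) * δs k * 2 := by rw [this]; norm_num
    rw [htsum]
    have hp : (0:ℝ) < (2:ℝ)⁻¹ ^ (k + 1) := by positivity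
    have hple : (2:ℝ)⁻¹ ^ (k + 1) ≤ 2⁻¹ := by
      calc (2:ℝ)⁻¹ ^ (k+1) ≤ (2:ℝ)⁻¹ ^ 1 :=
        pow_le_pow_of_le_one (by norm_num) (by norm_num) (Nat.le_add_left 1 k)
      _ = 2⁻¹ := pow_one _
    nlinarith [hδpos k]
  have hUint : ∀ k, ∫ ω in U k, |f' (nk k) ω| ∂μ ≤ (2:ℝ)⁻¹ ^ k :=
    fun k => (hQg k).2.2.2.2 (U k) (hUmeas k) (hUμ k)
  -- the disjoint sets
  set A : ℕ → Set Ω := fun k => E k \ U k with hAdef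
  have hAmeas : ∀ k, MeasurableSet (A k) := fun k => (hEmeas k).diff (hUmeas k)
  have hdisj : ∀ m k, m < k → Disjoint (A m) (A k) := by
    intro m k h
    rw [Set.disjoint_left]
    intro x hxm hxk
    exact hxm.2 (Set.mem_iUnion.2 ⟨k, Set.mem_iUnion.2 ⟨h, hxk.1⟩⟩)
  refine ⟨nk, hmono, A, hAmeas, fun m k h => h.lt_or_gt.elim (fun h' => hdisj _ _ h')
    (fun h' => (hdisj _ _ h').symm), ?_⟩
  intro ε hε
  have hα8 : (⨅ j, S j) < α + ε / 8 := by rw [← hαdef]; linarith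
  obtain ⟨J, hJ⟩ := exists_lt_of_ciInf_lt hα8
  obtain ⟨K₂, hK₂⟩ : ∃ K₂ : ℕ, (2:ℝ)⁻¹ ^ K₂ < ε / 16 :=
    exists_pow_lt_of_lt_one (by linarith) (by norm_num)
  set K := max (J + 1) K₂ with hKdef
  set G : Ω → ℝ := fun ω => ∑ i ∈ Finset.range K, |f' (nk i) ω| with hGdef
  have hGint : Integrable G μ := integrable_finset_sum _ fun i _ => habs (nk i)
  obtain ⟨δ₁, hδ₁, hδ₁P⟩ := KP.abscont hGint (half_pos hε)
  have hδfin : (0:ℝ) < min δ₁ (ε / (2 * (J + 1))) := lt_min hδ₁ (by positivity)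
  refine ⟨min δ₁ (ε / (2 * (J + 1))), hδfin, fun B hB hμB k => ?_⟩
  have hswap : ∫ ω in B, |Set.indicator (A k)ᶜ (f (nk k)) ω| ∂μ
      = ∫ ω in B, |Set.indicator (A k)ᶜ (f' (nk k)) ω| ∂μ := by
    refine integral_congr_ae (ae_restrict_of_ae ((hae (nk k)).mono fun ω h => ?_))
    simp only [Set.indicator_apply]
    split_ifs <;> simp [h]
  rw [hswap]
  have hindeq : ∀ ω, |Set.indicator (A k)ᶜ (f' (nk k)) ω|
      = Set.indicator (A k)ᶜ (fun ω => |f' (nk k) ω|) ω := by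
    intro ω; simp only [Set.indicator_apply]; split_ifs <;> simp
  have hkey : ∫ ω in B, |Set.indicator (A k)ᶜ (f' (nk k)) ω| ∂μ
      = ∫ ω in B ∩ (A k)ᶜ, |f' (nk k) ω| ∂μ := by
    simp_rw [hindeq]; exact setIntegral_indicator (hAmeas k).compl
  rw [hkey]
  have hμBle : μ B ≤ ENNReal.ofReal δ₁ :=
    hμB.le.trans (ENNReal.ofReal_le_ofReal (min_le_left _ _))
  by_cases hk : k < K
  · have h1 : ∫ ω in B ∩ (A k)ᶜ, |f' (nk k) ω| ∂μ ≤ ∫ ω in B, |f' (nk k) ω| ∂μ :=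
      setIntegral_mono_set (habs _).integrableOn (ae_of_all _ fun ω => abs_nonneg _)
        (HasSubset.Subset.eventuallyLE Set.inter_subset_left)
    have h2 : ∫ ω in B, |f' (nk k) ω| ∂μ ≤ ∫ ω in B, |G ω| ∂μ := by
      refine setIntegral_mono_on (habs _).integrableOn hGint.abs.integrableOn hB
        fun ω _ => le_trans ?_ (le_abs_self _)
      exact Finset.single_le_sum (fun i _ => abs_nonneg (f' (nk i) ω))
        (Finset.mem_range.2 hk)
    have h3 := hδ₁P B hB hμBle
    linarith
  · push_neg at hk
    have hJk : J ≤ k := le_trans (Nat.le_of_succ_le (le_max_left (J + 1) K₂)) hk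
    have hJL : J ≤ Ls k := hJk.trans (hQg k).2.1
    have hpow : (2:ℝ)⁻¹ ^ k < ε / 16 :=
      lt_of_le_of_lt (pow_le_pow_of_le_one (by norm_num) (by norm_num)
        (le_trans (le_max_right _ _) hk)) hK₂
    set s1 : Set Ω := B ∩ {ω | |f' (nk k) ω| < J} with hs1
    set s2 : Set Ω := T (nk k) J \ E k with hs2
    have hs1m : MeasurableSet s1 :=
      hB.inter (measurableSet_lt (hmeas _).measurable.abs measurable_const)
    have hs2m : MeasurableSet s2 := (hT _ _).diff (hEmeas k)
    have hsub : B ∩ (A k)ᶜ ⊆ (s1 ∪ s2) ∪ U k := by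
      rintro x ⟨hxB, hxA⟩
      by_cases hxU : x ∈ U k
      · exact Or.inr hxU
      · have hxE : x ∉ E k := fun hxE => hxA ⟨hxE, hxU⟩
        by_cases hxJ : |f' (nk k) x| < J
        · exact Or.inl (Or.inl ⟨hxB, hxJ⟩)
        · exact Or.inl (Or.inr ⟨not_lt.1 hxJ, hxE⟩)
    have hmain : ∫ ω in B ∩ (A k)ᶜ, |f' (nk k) ω| ∂μ ≤
        (∫ ω in s1, |f' (nk k) ω| ∂μ + ∫ ω in s2, |f' (nk k) ω| ∂μ)
          + ∫ ω in U k, |f' (nk k) ω| ∂μ := by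
      refine le_trans (setIntegral_mono_set (habs _).integrableOn
        (ae_of_all _ fun ω => abs_nonneg _) (HasSubset.Subset.eventuallyLE hsub)) ?_
      refine le_trans (KP.setIntegral_union_le (habs _) (fun ω => abs_nonneg _)
        (hs1m.union hs2m) (hUmeas k)) ?_
      exact add_le_add_left (KP.setIntegral_union_le (habs _) (fun ω => abs_nonneg _)
        hs1m hs2m) _
    have hμs1 : (μ s1).toReal ≤ ε / (2 * (J + 1)) := by
      have h4 : μ s1 ≤ ENNReal.ofReal (min δ₁ (ε / (2 * (J + 1)))) :=
        (measure_mono Set.inter_subset_left).trans hμB.le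
      calc (μ s1).toReal ≤ (ENNReal.ofReal (min δ₁ (ε / (2 * (J + 1))))).toReal :=
            ENNReal.toReal_mono ENNReal.ofReal_ne_top h4
        _ = min δ₁ (ε / (2 * (J + 1))) := ENNReal.toReal_ofReal hδfin.le
        _ ≤ ε / (2 * (J + 1)) := min_le_right _ _
    have hbound1 : ∫ ω in s1, |f' (nk k) ω| ∂μ ≤ ε / 2 := by
      have h5 : ∫ ω in s1, |f' (nk k) ω| ∂μ ≤ ∫ _ω in s1, (J:ℝ) ∂μ :=
        setIntegral_mono_on (habs _).integrableOn
          (integrableOn_const (measure_ne_top μ _)) hs1m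
          fun ω hω => le_of_lt hω.2
      rw [setIntegral_const, smul_eq_mul] at h5
      have hJ1 : (μ s1).toReal * (J:ℝ) ≤ (ε / (2 * (J + 1))) * J :=
        mul_le_mul_of_nonneg_right hμs1 (Nat.cast_nonneg J)
      have hJ2 : (ε / (2 * ((J:ℝ) + 1))) * J ≤ ε / 2 := by
        rw [div_mul_eq_mul_div, div_le_div_iff₀ (by positivity) two_pos]
        nlinarith [Nat.cast_nonneg (α := ℝ) J, hε]
      have hJcast : (ε / (2 * ((J:ℝ) + 1))) * J = (ε / (2 * (J + 1))) * J := by ring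
      exact h5.trans (hJ1.trans hJ2)
    have hbound2 : ∫ ω in s2, |f' (nk k) ω| ∂μ ≤ ε / 8 + 2 * (2:ℝ)⁻¹ ^ k := by
      have hEsub : E k ⊆ T (nk k) J := by
        intro x hx
        have hx' : ((Ls k : ℕ) : ℝ) ≤ |f' (nk k) x| := hx
        show (J:ℝ) ≤ |f' (nk k) x|
        exact le_trans (by exact_mod_cast hJL) hx'
      have hdiff : ∫ ω in s2, |f' (nk k) ω| ∂μ = a (nk k) J - a (nk k) (Ls k) :=
        integral_diff (hEmeas k) (habs _).integrableOn hEsub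
      rw [hdiff]
      have h7 : a (nk k) J ≤ S J + (2:ℝ)⁻¹ ^ k := (hQg k).2.2.1 J hJk
      have h8 : α - (2:ℝ)⁻¹ ^ k ≤ a (nk k) (Ls k) := (hQg k).2.2.2.1
      linarith
    have hbound3 := hUint k
    linarith
end

section
/- Let μ be a finite Borel measure on S^{n-1} and K₀ : ℝ₊ × S^{n-1} → ℝ such that for every λ > 0, the modulus ω_λ(δ) → 0 as δ → 0, where ω_λ(δ) is the supremum over finite Borel partitions (A_i) of S^{n-1} of Σ_i sup{ ∫_{A_i} |K₀(s,t) − K₀(s′,t)| dμ(t) : s, s′ ∈ [0,λ], |s − s′| ≤ δ }. Then there exists a Borel set A₀ ⊂ S^{n-1} with μ(A₀) = 0 such that for every t ∉ A₀, the function s ↦ K₀(s,t) is uniformly continuous on every bounded set of rational numbers. -/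
open MeasureTheory Filter Topology

open scoped ENNReal



lemma integrable_finset_sup' {α : Type*} {mα : MeasurableSpace α} {μ : Measure α}
    {ι : Type*} {s : Finset ι} (hs : s.Nonempty) {f : ι → α → ℝ}
    (hf : ∀ i ∈ s, Integrable (f i) μ) :
    Integrable (fun t => s.sup' hs fun i => f i t) μ := by
  classical
  induction s using Finset.cons_induction with
  | empty => exact absurd hs (by simp)
  | cons a s ha ih =>
    rcases s.eq_empty_or_nonempty with rfl | hs'
    · simpa using hf a (by simp)
    · have : (fun t => (Finset.cons a s ha).sup' hs fun i => f i t)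
          = fun t => f a t ⊔ s.sup' hs' fun i => f i t := by
        funext t; rw [Finset.sup'_cons hs']
      rw [this]
      exact (hf a (by simp)).sup (ih hs' fun i hi => hf i (by simp [hi]))

lemma sup'_integral_le {α : Type*} {mα : MeasurableSpace α} {μ : Measure α} {m : ℕ}
    (f : Fin (m + 1) → α → ℝ) (hm : ∀ i, Measurable (f i)) (hi : ∀ i, Integrable (f i) μ)
    {ε : ℝ}
    (h : ∀ A : Fin (m + 1) → Set α, (∀ i, MeasurableSet (A i)) →
      Pairwise (Function.onFun Disjoint A) → (⋃ i, A i) = Set.univ →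
      ∑ i, ∫ t in A i, f i t ∂μ ≤ ε) :
    ∫ t, Finset.univ.sup' Finset.univ_nonempty (fun i => f i t) ∂μ ≤ ε := by
  classical
  set A : Fin (m + 1) → Set α := fun i =>
    {t | (∀ j, f j t ≤ f i t) ∧ ∀ j, j < i → f j t < f i t} with hA
  have hAm : ∀ i, MeasurableSet (A i) := by
    intro i
    have : A i = (⋂ j, {t | f j t ≤ f i t}) ∩ ⋂ j, ⋂ _ : j < i, {t | f j t < f i t} := by
      ext t; simp [hA, Set.mem_iInter]
    rw [this]
    exact (MeasurableSet.iInter fun j => measurableSet_le (hm j) (hm i)).inter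
      (MeasurableSet.iInter fun j => MeasurableSet.iInter fun _ => measurableSet_lt (hm j) (hm i))
  have hAd : Pairwise (Function.onFun Disjoint A) := by
    intro i j hij
    rw [Function.onFun, Set.disjoint_left]
    rintro t ⟨h1, h2⟩ ⟨h3, h4⟩
    rcases hij.lt_or_gt with hlt | hlt
    · exact absurd (h1 j) (not_le.2 (h4 i hlt))
    · exact absurd (h3 i) (not_le.2 (h2 j hlt))
  have hAc : (⋃ i, A i) = Set.univ := by
    ext t
    simp only [Set.mem_iUnion, Set.mem_univ, iff_true]
    obtain ⟨i₁, -, hmax⟩ := Finset.exists_max_image Finset.univ (fun i => f i t)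
      Finset.univ_nonempty
    set T : Finset (Fin (m + 1)) := Finset.univ.filter (fun i => ∀ j, f j t ≤ f i t) with hT
    have hTne : T.Nonempty := by
      refine ⟨i₁, ?_⟩
      simp only [hT, Finset.mem_filter, Finset.mem_univ, true_and]
      exact fun j => hmax j (Finset.mem_univ j)
    have hmem : ∀ l, f l t ≤ f (T.min' hTne) t := by
      have := T.min'_mem hTne
      simpa [hT] using this
    refine ⟨T.min' hTne, hmem, ?_⟩
    intro j hj
    have hjT : j ∉ T := fun hjT => absurd (T.min'_le j hjT) (not_le.2 hj)
    have : ¬ ∀ l, f l t ≤ f j t := by simpa [hT] using hjT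
    push_neg at this
    obtain ⟨l, hl⟩ := this
    exact lt_of_lt_of_le hl (hmem l)
  have hHint : Integrable (fun t => Finset.univ.sup' Finset.univ_nonempty fun i => f i t) μ :=
    integrable_finset_sup' _ fun i _ => hi i
  have hcov : (⋃ i ∈ (Finset.univ : Finset (Fin (m + 1))), A i) = Set.univ := by
    simpa using hAc
  calc ∫ t, Finset.univ.sup' Finset.univ_nonempty (fun i => f i t) ∂μ
      = ∫ t in ⋃ i ∈ (Finset.univ : Finset (Fin (m + 1))), A i,
          Finset.univ.sup' Finset.univ_nonempty (fun i => f i t) ∂μ := by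
        rw [hcov, setIntegral_univ]
    _ = ∑ i, ∫ t in A i, Finset.univ.sup' Finset.univ_nonempty (fun i => f i t) ∂μ := by
        refine integral_biUnion_finset _ (fun i _ => hAm i) ?_ (fun i _ => hHint.integrableOn)
        exact fun i _ j _ hij => hAd hij
    _ = ∑ i, ∫ t in A i, f i t ∂μ := by
        refine Finset.sum_congr rfl fun i _ => setIntegral_congr_fun (hAm i) fun t ht => ?_
        exact le_antisymm (Finset.sup'_le _ _ fun j _ => ht.1 j)
          (Finset.le_sup' (fun j => f j t) (Finset.mem_univ i))
    _ ≤ ε := h A hAm hAd hAc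

/-- If the partition modulus `ω_λ(δ)` of the kernel `K₀` tends to `0` as `δ → 0` for every
`λ > 0`, then off a μ-null Borel set `A₀`, the function `s ↦ K₀(s,t)` is uniformly
continuous on every bounded set of rational numbers. -/
theorem stmt18 {n : ℕ} (μ : Measure (Metric.sphere (0 : EuclideanSpace ℝ (Fin n)) 1))
    [IsFiniteMeasure μ]
    (K₀ : ℝ → Metric.sphere (0 : EuclideanSpace ℝ (Fin n)) 1 → ℝ)
    (hmeas : ∀ s : ℝ, 0 ≤ s → Measurable (K₀ s))
    (hint : ∀ s : ℝ, 0 ≤ s → Integrable (K₀ s) μ)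
    (hmod : ∀ lam > (0:ℝ), ∀ ε > (0:ℝ), ∃ δ > (0:ℝ),
      ∀ (m : ℕ) (A : Fin m → Set (Metric.sphere (0 : EuclideanSpace ℝ (Fin n)) 1)),
        (∀ i, MeasurableSet (A i)) → Pairwise (Function.onFun Disjoint A) →
        (⋃ i, A i) = Set.univ →
        ∀ s s' : Fin m → ℝ,
          (∀ i, s i ∈ Set.Icc 0 lam ∧ s' i ∈ Set.Icc 0 lam ∧ |s i - s' i| ≤ δ) →
          ∑ i, ∫ t in A i, |K₀ (s i) t - K₀ (s' i) t| ∂μ ≤ ε) :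
    ∃ A₀ : Set (Metric.sphere (0 : EuclideanSpace ℝ (Fin n)) 1),
      MeasurableSet A₀ ∧ μ A₀ = 0 ∧
      ∀ t ∉ A₀, ∀ k : ℕ, ∀ ε > (0:ℝ), ∃ δ > (0:ℝ), ∀ s s' : ℚ,
        (s : ℝ) ∈ Set.Icc (0:ℝ) k → (s' : ℝ) ∈ Set.Icc (0:ℝ) k →
        |(s : ℝ) - (s' : ℝ)| ≤ δ → |K₀ (s : ℝ) t - K₀ (s' : ℝ) t| ≤ ε := by
  classical
  choose δ hδpos hδ using fun (k j : ℕ) =>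
    hmod ((k : ℝ) + 1) (by positivity) ((4 : ℝ)⁻¹ ^ j) (by positivity)
  set P : ℕ → ℕ → Set (ℚ × ℚ) := fun k j =>
    {p | (p.1 : ℝ) ∈ Set.Icc (0:ℝ) k ∧ (p.2 : ℝ) ∈ Set.Icc (0:ℝ) k ∧
      |(p.1 : ℝ) - (p.2 : ℝ)| ≤ δ k j} with hPdef
  set g : ℚ × ℚ → Metric.sphere (0 : EuclideanSpace ℝ (Fin n)) 1 → ℝ :=
    fun p t => |K₀ (p.1 : ℝ) t - K₀ (p.2 : ℝ) t| with hgdef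
  have hg_meas : ∀ k j, ∀ p ∈ P k j, Measurable (g p) := by
    rintro k j p ⟨h1, h2, -⟩
    exact ((hmeas _ h1.1).sub (hmeas _ h2.1)).abs
  have hg_int : ∀ k j, ∀ p ∈ P k j, Integrable (g p) μ := by
    rintro k j p ⟨h1, h2, -⟩
    exact ((hint _ h1.1).sub (hint _ h2.1)).abs
  have hg_nonneg : ∀ p t, 0 ≤ g p t := fun p t => abs_nonneg _
  set G : ℕ → ℕ → Metric.sphere (0 : EuclideanSpace ℝ (Fin n)) 1 → ℝ≥0∞ :=
    fun k j t => ⨆ p : P k j, ENNReal.ofReal (g p t) with hGdef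
  have hG_meas : ∀ k j, Measurable (G k j) := fun k j =>
    Measurable.iSup fun p => (hg_meas k j p p.2).ennreal_ofReal
  have hPmem : ∀ k j, ((0, 0) : ℚ × ℚ) ∈ P k j := by
    intro k j
    have h0 : (((0:ℚ) : ℝ)) ∈ Set.Icc (0:ℝ) k := by norm_num
    exact ⟨h0, h0, by simpa using (hδpos k j).le⟩
  -- key integral bound
  have hkey : ∀ k j, ∫⁻ t, G k j t ∂μ ≤ ENNReal.ofReal ((4 : ℝ)⁻¹ ^ j) := by
    intro k j
    have : Nonempty (P k j) := ⟨⟨_, hPmem k j⟩⟩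
    obtain ⟨e, he⟩ := exists_surjective_nat (P k j)
    set h : ℕ → Metric.sphere (0 : EuclideanSpace ℝ (Fin n)) 1 → ℝ≥0∞ :=
      fun N t => ⨆ i : Fin (N + 1), ENNReal.ofReal (g (e i) t) with hhdef
    have hmono : Monotone h := by
      refine monotone_nat_of_le_succ fun N t => ?_
      exact iSup_le fun i => le_iSup_of_le ⟨i.1, by omega⟩ le_rfl
    have hGsup : ∀ t, G k j t = ⨆ N, h N t := by
      intro t
      apply le_antisymm
      · have hcomp := he.iSup_comp (fun p : P k j => ENNReal.ofReal (g p t))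
        calc G k j t = ⨆ m, ENNReal.ofReal (g (e m) t) := hcomp.symm
          _ ≤ ⨆ N, h N t := iSup_le fun m =>
              le_iSup_of_le m (le_iSup_of_le (Fin.last m) le_rfl)
      · exact iSup_le fun N => iSup_le fun i =>
          le_iSup (fun p : P k j => ENNReal.ofReal (g p t)) (e i)
    have hmeas_h : ∀ N, Measurable (h N) := fun N =>
      Measurable.iSup fun i => (hg_meas k j _ (e i).2).ennreal_ofReal
    have hbound : ∀ N, ∫⁻ t, h N t ∂μ ≤ ENNReal.ofReal ((4 : ℝ)⁻¹ ^ j) := by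
      intro N
      set f : Fin (N + 1) → Metric.sphere (0 : EuclideanSpace ℝ (Fin n)) 1 → ℝ :=
        fun i t => g (e i) t with hfdef
      set H : Metric.sphere (0 : EuclideanSpace ℝ (Fin n)) 1 → ℝ :=
        fun t => Finset.univ.sup' Finset.univ_nonempty fun i => f i t with hHdef
      have hHint : Integrable H μ :=
        integrable_finset_sup' _ fun i _ => hg_int k j _ (e i).2
      have hHnn : 0 ≤ᵐ[μ] H := ae_of_all _ fun t =>
        le_trans (hg_nonneg (e (0 : Fin (N + 1))) t)
          (Finset.le_sup' (fun i => f i t) (Finset.mem_univ 0))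
      have h_eq : ∀ t, h N t = ENNReal.ofReal (H t) := by
        intro t
        apply le_antisymm
        · exact iSup_le fun i => ENNReal.ofReal_le_ofReal
            (Finset.le_sup' (fun i => f i t) (Finset.mem_univ i))
        · obtain ⟨i, -, hieq⟩ :=
            Finset.exists_mem_eq_sup' Finset.univ_nonempty (fun i => f i t)
          rw [hHdef]
          simp only
          rw [hieq]
          exact le_iSup (fun i : Fin (N + 1) => ENNReal.ofReal (g (e i) t)) i
      have hHle : ∫ t, H t ∂μ ≤ (4 : ℝ)⁻¹ ^ j := by
        refine sup'_integral_le f (fun i => hg_meas k j _ (e i).2)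
          (fun i => hg_int k j _ (e i).2) ?_
        intro A hAm hAd hAc
        refine hδ k j (N + 1) A hAm hAd hAc (fun i => ((e i : ℚ × ℚ).1 : ℝ))
          (fun i => ((e i : ℚ × ℚ).2 : ℝ)) ?_
        intro i
        obtain ⟨h1, h2, h3⟩ := (e i).2
        exact ⟨⟨h1.1, h1.2.trans (by linarith)⟩, ⟨h2.1, h2.2.trans (by linarith)⟩, h3⟩
      calc ∫⁻ t, h N t ∂μ = ∫⁻ t, ENNReal.ofReal (H t) ∂μ := by
            simp only [h_eq]
        _ = ENNReal.ofReal (∫ t, H t ∂μ) :=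
            (ofReal_integral_eq_lintegral_ofReal hHint hHnn).symm
        _ ≤ ENNReal.ofReal ((4 : ℝ)⁻¹ ^ j) := ENNReal.ofReal_le_ofReal hHle
    calc ∫⁻ t, G k j t ∂μ = ∫⁻ t, ⨆ N, h N t ∂μ := by simp only [hGsup]
      _ = ⨆ N, ∫⁻ t, h N t ∂μ := lintegral_iSup hmeas_h hmono
      _ ≤ ENNReal.ofReal ((4 : ℝ)⁻¹ ^ j) := iSup_le hbound
  set B : ℕ → ℕ → Set (Metric.sphere (0 : EuclideanSpace ℝ (Fin n)) 1) :=
    fun k j => {t | ENNReal.ofReal ((2 : ℝ)⁻¹ ^ j) < G k j t} with hBdef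
  have hB_meas : ∀ k j, MeasurableSet (B k j) :=
    fun k j => measurableSet_lt measurable_const (hG_meas k j)
  have hB_bound : ∀ k j, μ (B k j) ≤ ENNReal.ofReal ((2 : ℝ)⁻¹ ^ j) := by
    intro k j
    have h1 : ENNReal.ofReal ((2 : ℝ)⁻¹ ^ j) * μ (B k j) ≤ ∫⁻ t, G k j t ∂μ := by
      refine le_trans ?_ (mul_meas_ge_le_lintegral₀ (hG_meas k j).aemeasurable (ENNReal.ofReal ((2 : ℝ)⁻¹ ^ j)))
      refine mul_le_mul_right (measure_mono ?_) _
      intro t ht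
      have ht' : ENNReal.ofReal ((2 : ℝ)⁻¹ ^ j) < G k j t := ht
      exact ht'.le
    have hc0 : ENNReal.ofReal ((2 : ℝ)⁻¹ ^ j) ≠ 0 := by
      rw [Ne, ENNReal.ofReal_eq_zero, not_le]
      positivity
    have h2 : μ (B k j) ≤ ENNReal.ofReal ((4 : ℝ)⁻¹ ^ j) / ENNReal.ofReal ((2 : ℝ)⁻¹ ^ j) := by
      rw [ENNReal.le_div_iff_mul_le (Or.inl hc0) (Or.inl ENNReal.ofReal_ne_top)]
      rw [mul_comm]
      exact h1.trans (hkey k j)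
    refine h2.trans ?_
    rw [← ENNReal.ofReal_div_of_pos (by positivity)]
    apply ENNReal.ofReal_le_ofReal
    rw [← div_pow]
    norm_num
  have hsum : ∀ k, (∑' j, μ (B k j)) ≠ ∞ := by
    intro k
    have hle : (∑' j, μ (B k j)) ≤ ∑' j : ℕ, ENNReal.ofReal ((2 : ℝ)⁻¹ ^ j) :=
      ENNReal.tsum_le_tsum (hB_bound k)
    have : (∑' j : ℕ, ENNReal.ofReal ((2 : ℝ)⁻¹ ^ j))
        = ENNReal.ofReal (∑' j : ℕ, (2 : ℝ)⁻¹ ^ j) :=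
      (ENNReal.ofReal_tsum_of_nonneg (fun j => by positivity)
        (summable_geometric_of_lt_one (by norm_num) (by norm_num))).symm
    exact ne_top_of_le_ne_top (by rw [this]; exact ENNReal.ofReal_ne_top) hle
  have hls : ∀ k, limsup (B k) atTop = ⋂ m, ⋃ i, ⋃ _ : m ≤ i, B k i := by
    intro k
    rw [limsup_eq_iInf_iSup_of_nat]
    simp only [Set.iInf_eq_iInter, Set.iSup_eq_iUnion]
  refine ⟨⋃ k, limsup (B k) atTop, ?_, ?_, ?_⟩
  · refine MeasurableSet.iUnion fun k => ?_
    rw [hls k]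
    exact MeasurableSet.iInter fun m => MeasurableSet.iUnion fun i =>
      MeasurableSet.iUnion fun _ => hB_meas k i
  · exact measure_iUnion_null fun k => measure_limsup_atTop_eq_zero (hsum k)
  · intro t ht k ε hε
    rw [Set.mem_iUnion] at ht
    push_neg at ht
    have htk := ht k
    rw [hls k] at htk
    simp only [Set.mem_iInter, Set.mem_iUnion] at htk
    push_neg at htk
    obtain ⟨J, hJ⟩ := htk
    obtain ⟨j₀, hj₀⟩ := exists_pow_lt_of_lt_one hε (by norm_num : (2 : ℝ)⁻¹ < 1)
    set j := max J j₀ with hjdef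
    have hεj : (2 : ℝ)⁻¹ ^ j ≤ ε :=
      le_trans (pow_le_pow_of_le_one (by norm_num) (by norm_num) (le_max_right _ _)) hj₀.le
    refine ⟨δ k j, hδpos k j, ?_⟩
    intro s s' hs hs' hss
    have hp : ((s, s') : ℚ × ℚ) ∈ P k j := ⟨hs, hs', hss⟩
    have h1 : ENNReal.ofReal (g (s, s') t) ≤ G k j t :=
      le_iSup (fun p : P k j => ENNReal.ofReal (g (p : ℚ × ℚ) t)) ⟨(s, s'), hp⟩
    have h2 : G k j t ≤ ENNReal.ofReal ((2 : ℝ)⁻¹ ^ j) :=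
      not_lt.1 fun hc => hJ j (le_max_left _ _) hc
    have h3 : g (s, s') t ≤ (2 : ℝ)⁻¹ ^ j :=
      (ENNReal.ofReal_le_ofReal_iff (by positivity)).1 (h1.trans h2)
    exact h3.trans hεj
end
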